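/- arXiv:2412.09845 — 2 statements merged into one kernel-verified Lean document; each statement's English description precedes it below -/
import Mathlib

section
/- Under conditional exchangeability for study participation (Y(a) ⟂ S | X), conditional treatment exchangeability within the study (Y(a) ⟂ A | X, S=1), consistency (Y = Y(a) when S=1, A=a), and positivity of both participation and treatment assignment, the target mean E[Y(a) | S=0] is identified by the inverse-probability-weighting formula E[ I(S=1, A=a) · (1 − h(X)) / (h(X) e_a(X)) · Y ] / E[ I(S=1, A=a) · (1 − h(X)) / (h(X) e_a(X)) ], where h(X) = P(S=1 | X) and e_a(X) = P(A=a | X, S=1). -/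
open MeasureTheory ProbabilityTheory
open scoped ENNReal NNReal

section Aux
variable {Ω : Type*} {m : MeasurableSpace Ω} [mΩ : MeasurableSpace Ω]

lemma aux_pullout (hm : m ≤ mΩ) (μ : @Measure Ω mΩ) [IsFiniteMeasure μ]
    {k ψ : Ω → ℝ} (hk : StronglyMeasurable[m] k) {M : ℝ}
    (hkb : ∀ᵐ ω ∂μ, |k ω| ≤ M) (hψ : Integrable ψ μ) :
    ∫ ω, k ω * ψ ω ∂μ = ∫ ω, k ω * (μ[ψ|m]) ω ∂μ := by
  have hkψ0 : Integrable (fun ω => k ω * ψ ω) μ :=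
    hψ.bdd_mul (StronglyMeasurable.aestronglyMeasurable (μ := μ) (hk.mono hm))
      (by filter_upwards [hkb] with ω h using by simpa using h)
  have hkψ : Integrable (k * ψ) μ := hkψ0
  have h1 : μ[k * ψ|m] =ᵐ[μ] k * μ[ψ|m] :=
    condExp_mul_of_stronglyMeasurable_left hk hkψ hψ
  calc ∫ ω, k ω * ψ ω ∂μ = ∫ ω, (k * ψ) ω ∂μ := rfl
  _ = ∫ ω, (μ[k * ψ|m]) ω ∂μ := (integral_condExp hm).symm
  _ = ∫ ω, (k * μ[ψ|m]) ω ∂μ := integral_congr_ae h1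
  _ = ∫ ω, k ω * (μ[ψ|m]) ω ∂μ := rfl

lemma aux_factor_nonneg [StandardBorelSpace Ω] (hm : m ≤ mΩ) (μ : @Measure Ω mΩ)
    [IsProbabilityMeasure μ]
    {V : Ω → ℝ × ℝ} {g : Ω → ℝ} (hV : Measurable V) (hg : Measurable g)
    (hind : CondIndepFun m hm V g μ)
    {φ : ℝ × ℝ → ℝ} (hφ : Measurable φ)
    {k : Ω → ℝ} (hk : StronglyMeasurable[m] k) (hknn : ∀ ω, 0 ≤ k ω)
    {M' : ℝ} (hkb : ∀ ω, k ω ≤ M') :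
    ∫ ω, k ω * ((g ⁻¹' {1}).indicator (fun _ => (1:ℝ)) ω * φ (V ω)) ∂μ
      = ∫ ω, k ω * ((μ[(g ⁻¹' {1}).indicator (fun _ => (1:ℝ))|m]) ω * φ (V ω)) ∂μ := by
  set B : Set Ω := g ⁻¹' {1} with hBdef
  have hB : MeasurableSet B := hg (measurableSet_singleton 1)
  set ι : Ω → ℝ := B.indicator (fun _ => (1:ℝ)) with hιdef
  have hιmeas : Measurable ι := (measurable_const.indicator hB)
  set q : Ω → ℝ := μ[ι|m] with hqdef
  have hqm : StronglyMeasurable[m] q := stronglyMeasurable_condExp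
  have hqmeas : Measurable q := (hqm.mono hm).measurable
  have hkmeas : Measurable k := (hk.mono hm).measurable
  have hι_int : Integrable ι μ := (integrable_const (1:ℝ)).indicator hB
  have hq01 : ∀ᵐ ω ∂μ, 0 ≤ q ω ∧ q ω ≤ 1 := by
    have h0 : 0 ≤ᵐ[μ] q := condExp_nonneg (by
      refine Filter.Eventually.of_forall fun ω => ?_
      by_cases h : ω ∈ B <;> simp [hιdef, Set.indicator_apply, h])
    have h1 : q ≤ᵐ[μ] fun _ => (1:ℝ) := by
      have h2 : q ≤ᵐ[μ] μ[(fun _ => (1:ℝ))|m] :=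
        condExp_mono hι_int (integrable_const 1) (Filter.Eventually.of_forall fun ω => by
          by_cases h : ω ∈ B <;> simp [hιdef, Set.indicator_apply, h])
      rw [condExp_const hm] at h2
      exact h2
    filter_upwards [h0, h1] with ω a b using ⟨a, b⟩
  -- key: equality of measures
  have hkq_ae_nn : ∀ᵐ ω ∂μ, 0 ≤ k ω * q ω := by
    filter_upwards [hq01] with ω h using mul_nonneg (hknn ω) h.1
  have key : (μ.withDensity (fun ω => ((k ω * ι ω).toNNReal : ℝ≥0∞))).map V
      = (μ.withDensity (fun ω => ((k ω * q ω).toNNReal : ℝ≥0∞))).map V := by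
    have hd1 : Measurable fun ω => ((k ω * ι ω).toNNReal : ℝ≥0∞) :=
      ((hkmeas.mul hιmeas).real_toNNReal).coe_nnreal_ennreal
    have hd2 : Measurable fun ω => ((k ω * q ω).toNNReal : ℝ≥0∞) :=
      ((hkmeas.mul hqmeas).real_toNNReal).coe_nnreal_ennreal
    ext t ht
    rw [Measure.map_apply hV ht, Measure.map_apply hV ht,
      withDensity_apply _ (hV ht), withDensity_apply _ (hV ht)]
    -- real integral equality
    have hjt : MeasurableSet (V ⁻¹' t) := hV ht
    set jt : Ω → ℝ := (V ⁻¹' t).indicator (fun _ => (1:ℝ)) with hjtdef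
    have hjm : Measurable jt := measurable_const.indicator hjt
    have hψ_int : Integrable (fun ω => ι ω * jt ω) μ := by
      refine (integrable_const (1:ℝ)).mono' ((hιmeas.mul hjm).aestronglyMeasurable) ?_
      refine Filter.Eventually.of_forall fun ω => ?_
      by_cases h1 : ω ∈ B <;> by_cases h2 : ω ∈ V ⁻¹' t <;>
        simp [hιdef, hjtdef, Set.indicator_apply, h1, h2]
    have hcond : μ[fun ω => ι ω * jt ω|m] =ᵐ[μ] fun ω => (μ[jt|m]) ω * q ω := by
      have h1 : (fun ω => ι ω * jt ω) = (V ⁻¹' t ∩ B).indicator (fun _ => (1:ℝ)) := by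
        funext ω
        by_cases h1 : ω ∈ B <;> by_cases h2 : ω ∈ V ⁻¹' t <;>
          simp [hιdef, hjtdef, Set.indicator_apply, h1, h2, Set.mem_inter_iff]
      have h2 := (condIndepFun_iff_condExp_inter_preimage_eq_mul (hm' := hm)
        hV hg).mp hind t {1} ht (measurableSet_singleton 1)
      rw [h1]
      filter_upwards [h2] with ω hω
      simpa [hιdef, hjtdef, hqdef] using hω
    have E : ∫ ω, k ω * (ι ω * jt ω) ∂μ = ∫ ω, (k ω * q ω) * jt ω ∂μ := by
      rw [aux_pullout hm μ hk (Filter.Eventually.of_forall fun ω => abs_le.mpr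
        ⟨le_trans (by simpa using neg_nonpos.mpr (le_trans (hknn ω) (hkb ω))) (hknn ω), hkb ω⟩) hψ_int]
      have e2 : ∫ ω, k ω * (μ[fun ω => ι ω * jt ω|m]) ω ∂μ
          = ∫ ω, (k ω * q ω) * (μ[jt|m]) ω ∂μ := by
        refine integral_congr_ae ?_
        filter_upwards [hcond] with ω hω
        rw [hω]; ring
      rw [e2]
      have hjt_int : Integrable jt μ := by
        refine (integrable_const (1:ℝ)).mono' (hjm.aestronglyMeasurable) ?_
        refine Filter.Eventually.of_forall fun ω => ?_
        by_cases h2 : ω ∈ V ⁻¹' t <;> simp [hjtdef, Set.indicator_apply, h2]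
      have := aux_pullout hm μ (hk.mul hqm) (M := max M' 0 * 1)
        (by
          filter_upwards [hq01] with ω h
          show |k ω * q ω| ≤ max M' 0 * 1
          rw [abs_of_nonneg (mul_nonneg (hknn ω) h.1)]
          exact mul_le_mul (le_max_of_le_left (hkb ω)) h.2 h.1 (le_max_right _ _)) hjt_int
      exact this.symm
    -- convert E to lintegral equality
    have nn1 : 0 ≤ᵐ[μ] fun ω => k ω * (ι ω * jt ω) := by
      refine Filter.Eventually.of_forall fun ω => mul_nonneg (hknn ω) (mul_nonneg ?_ ?_) <;>
        first
          | (by_cases h1 : ω ∈ B <;> simp [hιdef, Set.indicator_apply, h1])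
          | (by_cases h2 : ω ∈ V ⁻¹' t <;> simp [hjtdef, Set.indicator_apply, h2])
    have nn2 : 0 ≤ᵐ[μ] fun ω => (k ω * q ω) * jt ω := by
      filter_upwards [hq01] with ω h
      refine mul_nonneg (mul_nonneg (hknn ω) h.1) ?_
      by_cases h2 : ω ∈ V ⁻¹' t <;> simp [hjtdef, Set.indicator_apply, h2]
    have int1 : Integrable (fun ω => k ω * (ι ω * jt ω)) μ :=
      hψ_int.bdd_mul (StronglyMeasurable.aestronglyMeasurable (μ := μ) (hk.mono hm))
        (Filter.Eventually.of_forall fun ω => by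
          rw [Real.norm_eq_abs, abs_of_nonneg (hknn ω)]; exact hkb ω)
    have int2 : Integrable (fun ω => (k ω * q ω) * jt ω) μ := by
      have hjt_int : Integrable jt μ := by
        refine (integrable_const (1:ℝ)).mono' (hjm.aestronglyMeasurable) ?_
        refine Filter.Eventually.of_forall fun ω => ?_
        by_cases h2 : ω ∈ V ⁻¹' t <;> simp [hjtdef, Set.indicator_apply, h2]
      refine hjt_int.bdd_mul (c := max M' 0 * 1) ((hkmeas.mul hqmeas).aestronglyMeasurable) ?_
      filter_upwards [hq01] with ω h
      rw [Real.norm_eq_abs, abs_of_nonneg (mul_nonneg (hknn ω) h.1)]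
      exact mul_le_mul (le_max_of_le_left (hkb ω)) h.2 h.1 (le_max_right M' 0)
    have l1 : ∫⁻ ω in V ⁻¹' t, ((k ω * ι ω).toNNReal : ℝ≥0∞) ∂μ
        = ENNReal.ofReal (∫ ω, k ω * (ι ω * jt ω) ∂μ) := by
      rw [ofReal_integral_eq_lintegral_ofReal int1 nn1, ← lintegral_indicator hjt]
      refine lintegral_congr fun ω => ?_
      by_cases h2 : ω ∈ V ⁻¹' t <;>
        simp [hjtdef, Set.indicator_apply, h2, ENNReal.ofReal]
    have l2 : ∫⁻ ω in V ⁻¹' t, ((k ω * q ω).toNNReal : ℝ≥0∞) ∂μ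
        = ENNReal.ofReal (∫ ω, (k ω * q ω) * jt ω ∂μ) := by
      rw [ofReal_integral_eq_lintegral_ofReal int2 nn2, ← lintegral_indicator hjt]
      refine lintegral_congr fun ω => ?_
      by_cases h2 : ω ∈ V ⁻¹' t <;>
        simp [hjtdef, Set.indicator_apply, h2, ENNReal.ofReal]
    rw [l1, l2, E]
  -- use the measure equality
  have m1 : ∫ ω, k ω * (ι ω * φ (V ω)) ∂μ
      = ∫ v, φ v ∂((μ.withDensity (fun ω => ((k ω * ι ω).toNNReal : ℝ≥0∞))).map V) := by
    rw [integral_map hV.aemeasurable hφ.aestronglyMeasurable]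
    rw [integral_withDensity_eq_integral_smul (f := fun ω => (k ω * ι ω).toNNReal) ((hkmeas.mul hιmeas).real_toNNReal)]
    refine integral_congr_ae (Filter.Eventually.of_forall fun ω => ?_)
    have hnn : 0 ≤ k ω * ι ω := mul_nonneg (hknn ω) (by
      by_cases h1 : ω ∈ B <;> simp [hιdef, Set.indicator_apply, h1])
    simp [NNReal.smul_def, Real.coe_toNNReal _ hnn]
    ring
  have m2 : ∫ ω, k ω * (q ω * φ (V ω)) ∂μ
      = ∫ v, φ v ∂((μ.withDensity (fun ω => ((k ω * q ω).toNNReal : ℝ≥0∞))).map V) := by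
    rw [integral_map hV.aemeasurable hφ.aestronglyMeasurable]
    rw [integral_withDensity_eq_integral_smul (f := fun ω => (k ω * q ω).toNNReal) ((hkmeas.mul hqmeas).real_toNNReal)]
    refine integral_congr_ae ?_
    filter_upwards [hq01] with ω h
    have hnn : 0 ≤ k ω * q ω := mul_nonneg (hknn ω) h.1
    simp [NNReal.smul_def, Real.coe_toNNReal _ hnn]
    ring
  rw [m1, m2, key]
end Aux

section Aux2
variable {Ω : Type*} {m : MeasurableSpace Ω} [mΩ : MeasurableSpace Ω]

lemma integrable_of_bound (μ : @Measure Ω mΩ) [IsFiniteMeasure μ] {f : Ω → ℝ} (c : ℝ)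
    (hf : AEStronglyMeasurable f μ) (hb : ∀ᵐ ω ∂μ, |f ω| ≤ c) : Integrable f μ :=
  (integrable_const c).mono' hf (by filter_upwards [hb] with ω h using by simpa using h)

lemma aux_sm_comp {Ω : Type*} {m : MeasurableSpace Ω} {k : Ω → ℝ}
    (hk : StronglyMeasurable[m] k) {f : ℝ → ℝ} (hf : Measurable f) :
    StronglyMeasurable[m] (fun ω => f (k ω)) :=
  (hf.comp hk.measurable).stronglyMeasurable

lemma aux_factor_bin [StandardBorelSpace Ω] (hm : m ≤ mΩ) (μ : @Measure Ω mΩ)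
    [IsProbabilityMeasure μ]
    {V : Ω → ℝ × ℝ} {g : Ω → ℝ} (hV : Measurable V) (hg : Measurable g)
    (hgbin : ∀ ω, g ω = 0 ∨ g ω = 1)
    (hind : CondIndepFun m hm V g μ)
    {φ : ℝ × ℝ → ℝ} (hφ : Measurable φ) {Mφ : ℝ} (hφb : ∀ ω, |φ (V ω)| ≤ Mφ)
    {k : Ω → ℝ} (hk : StronglyMeasurable[m] k) {M' : ℝ} (hkb : ∀ᵐ ω ∂μ, |k ω| ≤ M')
    {q : Ω → ℝ} (hq : q =ᵐ[μ] μ[g|m]) :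
    ∫ ω, k ω * (g ω * φ (V ω)) ∂μ = ∫ ω, k ω * (q ω * φ (V ω)) ∂μ := by
  set B : Set Ω := g ⁻¹' {1} with hBdef
  have hB : MeasurableSet B := hg (measurableSet_singleton 1)
  set ι : Ω → ℝ := B.indicator (fun _ => (1:ℝ)) with hιdef
  have hgι : g = ι := by
    funext ω
    rcases hgbin ω with h | h <;>
      simp [hιdef, hBdef, Set.indicator_apply, Set.mem_preimage, h]
  have hιmeas : Measurable ι := measurable_const.indicator hB
  have hq' : q =ᵐ[μ] μ[ι|m] := by rw [← hgι]; exact hq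
  -- truncate k
  set M : ℝ := max M' 0 with hMdef
  set k' : Ω → ℝ := fun ω => max (min (k ω) M) (-M) with hk'def
  have hk'm : StronglyMeasurable[m] k' := aux_sm_comp hk ((measurable_id.min measurable_const).max measurable_const)
  have hk'b : ∀ ω, |k' ω| ≤ M := fun ω => abs_le.mpr
    ⟨le_max_right _ _, max_le (min_le_right _ _) (neg_le_self (le_max_right M' 0))⟩
  have hk'ae : k' =ᵐ[μ] k := by
    filter_upwards [hkb] with ω h
    have h1 : k ω ≤ M := le_trans (le_abs_self _) (le_trans h (le_max_left _ _))
    have h2 : -M ≤ k ω := by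
      have := neg_abs_le (k ω)
      have h3 : -M ≤ -|k ω| := neg_le_neg (le_trans h (le_max_left _ _))
      linarith
    simp [hk'def, min_eq_left h1, max_eq_left h2]
  set kp : Ω → ℝ := fun ω => max (k' ω) 0 with hkpdef
  set kn : Ω → ℝ := fun ω => max (-(k' ω)) 0 with hkndef
  have hkpm : StronglyMeasurable[m] kp := aux_sm_comp hk'm (measurable_id.max measurable_const)
  have hknm : StronglyMeasurable[m] kn := aux_sm_comp hk'm (measurable_id.neg.max measurable_const)
  have hkpnn : ∀ ω, 0 ≤ kp ω := fun ω => le_max_right _ _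
  have hknnn : ∀ ω, 0 ≤ kn ω := fun ω => le_max_right _ _
  have hkpb : ∀ ω, kp ω ≤ M := fun ω => max_le (le_trans (le_abs_self _) (hk'b ω))
    (le_max_right M' 0)
  have hknb : ∀ ω, kn ω ≤ M := fun ω => max_le (le_trans (neg_le_abs _) (hk'b ω))
    (le_max_right M' 0)
  have hsplit : ∀ ω, k' ω = kp ω - kn ω := fun ω => by
    simp only [hkpdef, hkndef]
    rcases le_total (k' ω) 0 with h | h
    · rw [max_eq_right h, max_eq_left (by linarith)]; ring
    · rw [max_eq_left h, max_eq_right (by linarith)]; ring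
  -- q bounds
  have hq01 : ∀ᵐ ω ∂μ, |q ω| ≤ 1 := by
    have hι_int : Integrable ι μ := (integrable_const (1:ℝ)).indicator hB
    have h0 : 0 ≤ᵐ[μ] μ[ι|m] := condExp_nonneg (Filter.Eventually.of_forall fun ω => by
      by_cases h : ω ∈ B <;> simp [hιdef, Set.indicator_apply, h])
    have h1 : μ[ι|m] ≤ᵐ[μ] μ[(fun _ => (1:ℝ))|m] :=
      condExp_mono hι_int (integrable_const 1) (Filter.Eventually.of_forall fun ω => by
        by_cases h : ω ∈ B <;> simp [hιdef, Set.indicator_apply, h])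
    rw [condExp_const hm] at h1
    filter_upwards [h0, h1, hq'] with ω a b c
    simp only [Pi.zero_apply] at a
    rw [c]; exact abs_le.mpr ⟨by linarith, b⟩
  -- integrability of the four pieces
  have hqmeas : AEStronglyMeasurable q μ := by
    refine AEStronglyMeasurable.congr ?_ hq'.symm
    exact ((stronglyMeasurable_condExp.mono hm).aestronglyMeasurable)
  have hιb : ∀ ω, |ι ω * φ (V ω)| ≤ max Mφ 0 := by
    intro ω
    by_cases h : ω ∈ B
    · rw [hιdef, Set.indicator_of_mem h, one_mul]
      exact le_trans (hφb ω) (le_max_left _ _)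
    · rw [hιdef, Set.indicator_of_notMem h, zero_mul, abs_zero]
      exact le_max_right Mφ 0
  have intp1 : Integrable (fun ω => kp ω * (ι ω * φ (V ω))) μ := by
    refine integrable_of_bound μ (M * max Mφ 0)
      ((((hkpm.mono hm).measurable).mul (hιmeas.mul (hφ.comp hV))).aestronglyMeasurable) ?_
    refine Filter.Eventually.of_forall fun ω => ?_
    rw [abs_mul, abs_of_nonneg (hkpnn ω)]
    exact mul_le_mul (hkpb ω) (hιb ω) (abs_nonneg _) (le_trans (hkpnn ω) (hkpb ω))
  have intn1 : Integrable (fun ω => kn ω * (ι ω * φ (V ω))) μ := by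
    refine integrable_of_bound μ (M * max Mφ 0)
      ((((hknm.mono hm).measurable).mul (hιmeas.mul (hφ.comp hV))).aestronglyMeasurable) ?_
    refine Filter.Eventually.of_forall fun ω => ?_
    rw [abs_mul, abs_of_nonneg (hknnn ω)]
    exact mul_le_mul (hknb ω) (hιb ω) (abs_nonneg _) (le_trans (hknnn ω) (hknb ω))
  have hqφb : ∀ᵐ ω ∂μ, |q ω * φ (V ω)| ≤ 1 * max Mφ 0 := by
    filter_upwards [hq01] with ω h
    rw [abs_mul]
    exact mul_le_mul h (le_trans (hφb ω) (le_max_left _ _)) (abs_nonneg _) zero_le_one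
  have intp2 : Integrable (fun ω => kp ω * (q ω * φ (V ω))) μ := by
    refine integrable_of_bound μ (M * (1 * max Mφ 0))
      (((hkpm.mono hm).aestronglyMeasurable).mul (hqmeas.mul (hφ.comp hV).aestronglyMeasurable)) ?_
    filter_upwards [hqφb] with ω h
    rw [abs_mul, abs_of_nonneg (hkpnn ω)]
    exact mul_le_mul (hkpb ω) h (abs_nonneg _) (le_trans (hkpnn ω) (hkpb ω))
  have intn2 : Integrable (fun ω => kn ω * (q ω * φ (V ω))) μ := by
    refine integrable_of_bound μ (M * (1 * max Mφ 0))
      (((hknm.mono hm).aestronglyMeasurable).mul (hqmeas.mul (hφ.comp hV).aestronglyMeasurable)) ?_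
    filter_upwards [hqφb] with ω h
    rw [abs_mul, abs_of_nonneg (hknnn ω)]
    exact mul_le_mul (hknb ω) h (abs_nonneg _) (le_trans (hknnn ω) (hknb ω))
  have hp := aux_factor_nonneg hm μ hV hg hind hφ hkpm hkpnn hkpb
  have hn := aux_factor_nonneg hm μ hV hg hind hφ hknm hknnn hknb
  calc ∫ ω, k ω * (g ω * φ (V ω)) ∂μ
      = ∫ ω, k' ω * (ι ω * φ (V ω)) ∂μ := by
        rw [hgι]
        exact integral_congr_ae (by filter_upwards [hk'ae] with ω h using by rw [h])
    _ = ∫ ω, (kp ω * (ι ω * φ (V ω)) - kn ω * (ι ω * φ (V ω))) ∂μ := by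
        refine integral_congr_ae (Filter.Eventually.of_forall fun ω => ?_)
        dsimp only
        rw [hsplit ω]; ring
    _ = ∫ ω, kp ω * (ι ω * φ (V ω)) ∂μ - ∫ ω, kn ω * (ι ω * φ (V ω)) ∂μ :=
        integral_sub intp1 intn1
    _ = ∫ ω, kp ω * ((μ[ι|m]) ω * φ (V ω)) ∂μ - ∫ ω, kn ω * ((μ[ι|m]) ω * φ (V ω)) ∂μ := by
        rw [hp, hn]
    _ = ∫ ω, kp ω * (q ω * φ (V ω)) ∂μ - ∫ ω, kn ω * (q ω * φ (V ω)) ∂μ := by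
        congr 1 <;>
          exact integral_congr_ae (by filter_upwards [hq'] with ω h using by rw [h])
    _ = ∫ ω, (kp ω * (q ω * φ (V ω)) - kn ω * (q ω * φ (V ω))) ∂μ := (integral_sub intp2 intn2).symm
    _ = ∫ ω, k' ω * (q ω * φ (V ω)) ∂μ := by
        refine integral_congr_ae (Filter.Eventually.of_forall fun ω => ?_)
        dsimp only
        rw [hsplit ω]; ring
    _ = ∫ ω, k ω * (q ω * φ (V ω)) ∂μ :=
        integral_congr_ae (by filter_upwards [hk'ae] with ω h using by rw [h])
end Aux2

section Arm
open Filter Topology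
variable {Ω 𝒳 : Type*} [mΩ : MeasurableSpace Ω] [StandardBorelSpace Ω] [MeasurableSpace 𝒳]

lemma aux_arm (μ : Measure Ω) [IsProbabilityMeasure μ]
    (X : Ω → 𝒳) (hX : Measurable X)
    (S A Y : Ω → ℝ) (V : Ω → ℝ × ℝ)
    (hS : Measurable S) (hA : Measurable A) (hY : Measurable Y) (hV : Measurable V)
    (hSbin : ∀ ω, S ω = 0 ∨ S ω = 1) (hAbin : ∀ ω, A ω = 0 ∨ A ω = 1)
    (φ : ℝ × ℝ → ℝ) (hφ : Measurable φ) (Cb : ℝ) (hφb : ∀ ω, |φ (V ω)| ≤ Cb)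
    (hcons : ∀ ω, S ω = 1 → A ω = 1 → Y ω = φ (V ω))
    (hXle : MeasurableSpace.comap X inferInstance ≤ mΩ)
    (hexchS : CondIndepFun (MeasurableSpace.comap X inferInstance) hXle V S μ)
    (hexchA : CondIndepFun (MeasurableSpace.comap X inferInstance) hXle V A
      (μ[|{ω | S ω = 1}]))
    (h e : 𝒳 → ℝ) (hhm : Measurable h) (hem : Measurable e)
    (hhdef : (fun ω => h (X ω)) =ᵐ[μ] μ[S | MeasurableSpace.comap X inferInstance])
    (hedef : (fun ω => e (X ω))
      =ᵐ[μ[|{ω | S ω = 1}]] (μ[|{ω | S ω = 1}])[A | MeasurableSpace.comap X inferInstance])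
    (c : ℝ) (hc : 0 < c)
    (hpos : ∀ᵐ ω ∂(μ[|{ω | S ω = 0}]), c ≤ h (X ω) ∧ c ≤ e (X ω) ∧ e (X ω) ≤ 1)
    (hS1pos : 0 < μ {ω | S ω = 1}) (hS0pos : 0 < μ {ω | S ω = 0}) :
    ∫ ω, (if S ω = 1 ∧ A ω = 1 then (1:ℝ) else 0) *
        ((1 - h (X ω)) / (h (X ω) * e (X ω))) * Y ω ∂μ
      = (μ {ω | S ω = 0}).toReal * ∫ ω, φ (V ω) ∂(μ[|{ω | S ω = 0}]) := by
  set B1 : Set Ω := {ω | S ω = 1} with hB1def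
  set B0 : Set Ω := {ω | S ω = 0} with hB0def
  have hB1m : MeasurableSet B1 := hS (measurableSet_singleton 1)
  have hB0m : MeasurableSet B0 := hS (measurableSet_singleton 0)
  have hB0compl : B0 = B1ᶜ := by
    ext ω
    rcases hSbin ω with hw | hw <;> simp [hB0def, hB1def, hw]
  haveI hP1 : IsProbabilityMeasure (μ[|B1]) := cond_isProbabilityMeasure hS1pos.ne'
  haveI hP0 : IsProbabilityMeasure (μ[|B0]) := cond_isProbabilityMeasure hS0pos.ne'
  have hXG : Measurable[MeasurableSpace.comap X inferInstance] X := fun s hs => ⟨s, hs, rfl⟩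
  have hsmG : ∀ {f : 𝒳 → ℝ}, Measurable f → StronglyMeasurable[MeasurableSpace.comap X inferInstance] (fun ω => f (X ω)) :=
    fun hf => ((hf.comp hXG).stronglyMeasurable)
  set H : Ω → ℝ := fun ω => h (X ω) with hHdef
  set E : Ω → ℝ := fun ω => e (X ω) with hEdef
  have hHsm : StronglyMeasurable[MeasurableSpace.comap X inferInstance] H := hsmG hhm
  have hEsm : StronglyMeasurable[MeasurableSpace.comap X inferInstance] E := hsmG hem
  have hHmeas : Measurable H := hhm.comp hX
  have hEmeas : Measurable E := hem.comp hX
  -- ae transfer between cond measures and restricted measures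
  have hcond_ae : ∀ (B : Set Ω) (p : Ω → Prop), (∀ᵐ ω ∂(μ[|B]), p ω) ↔
      (∀ᵐ ω ∂(μ.restrict B), p ω) := by
    intro B p
    unfold ProbabilityTheory.cond
    rw [Measure.ae_ennreal_smul_measure_iff]
    simp only [ne_eq, ENNReal.inv_eq_zero]
    exact measure_ne_top μ B
  -- integral over cond measure
  have hrestr : ∀ (B : Set Ω), MeasurableSet B → μ B ≠ 0 → ∀ (f : Ω → ℝ),
      ∫ ω in B, f ω ∂μ = (μ B).toReal * ∫ ω, f ω ∂(μ[|B]) := by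
    intro B hBm hBne f
    unfold ProbabilityTheory.cond
    rw [integral_smul_measure, ENNReal.toReal_inv, smul_eq_mul, ← mul_assoc,
      mul_inv_cancel₀, one_mul]
    exact ENNReal.toReal_ne_zero.mpr ⟨hBne, measure_ne_top μ B⟩
  have hSmul : ∀ (f : Ω → ℝ), ∫ ω, S ω * f ω ∂μ = (μ B1).toReal * ∫ ω, f ω ∂(μ[|B1]) := by
    intro f
    rw [← hrestr B1 hB1m hS1pos.ne' f, ← integral_indicator hB1m]
    refine integral_congr_ae (Filter.Eventually.of_forall fun ω => ?_)
    rcases hSbin ω with hw | hw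
    · have : ω ∉ B1 := by simp [hB1def, hw]
      simp [Set.indicator_of_notMem this, hw]
    · have : ω ∈ B1 := by simp [hB1def, hw]
      simp [Set.indicator_of_mem this, hw]
  have hS0mul : ∀ (f : Ω → ℝ), ∫ ω, (1 - S ω) * f ω ∂μ = (μ B0).toReal * ∫ ω, f ω ∂(μ[|B0]) := by
    intro f
    rw [← hrestr B0 hB0m hS0pos.ne' f, ← integral_indicator hB0m]
    refine integral_congr_ae (Filter.Eventually.of_forall fun ω => ?_)
    rcases hSbin ω with hw | hw
    · have : ω ∈ B0 := by simp [hB0def, hw]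
      simp [Set.indicator_of_mem this, hw]
    · have : ω ∉ B0 := by simp [hB0def, hw]
      simp [Set.indicator_of_notMem this, hw]
  -- basic integrability
  have hSint : Integrable S μ := integrable_of_bound μ 1 hS.aestronglyMeasurable
    (Filter.Eventually.of_forall fun ω => by rcases hSbin ω with hw | hw <;> simp [hw])
  have hAint : Integrable A (μ[|B1]) := integrable_of_bound (μ[|B1]) 1 hA.aestronglyMeasurable
    (Filter.Eventually.of_forall fun ω => by rcases hAbin ω with hw | hw <;> simp [hw])
  -- a.e. bounds on H
  have hH01 : ∀ᵐ ω ∂μ, 0 ≤ H ω ∧ H ω ≤ 1 := by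
    have h0 : 0 ≤ᵐ[μ] μ[S|MeasurableSpace.comap X inferInstance] := condExp_nonneg (Filter.Eventually.of_forall fun ω => by
      rcases hSbin ω with hw | hw <;> simp [hw])
    have h1 : μ[S|MeasurableSpace.comap X inferInstance] ≤ᵐ[μ] μ[(fun _ => (1:ℝ))|MeasurableSpace.comap X inferInstance] := condExp_mono hSint (integrable_const 1)
      (Filter.Eventually.of_forall fun ω => by rcases hSbin ω with hw | hw <;> simp [hw])
    rw [condExp_const hXle] at h1
    filter_upwards [h0, h1, hhdef] with ω a b hdef
    simp only [Pi.zero_apply] at a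
    exact ⟨hdef ▸ a, hdef ▸ b⟩
  -- a.e. bounds on E
  have hE01 : ∀ᵐ ω ∂μ, 0 ≤ E ω ∧ E ω ≤ 1 := by
    refine ae_of_ae_restrict_of_ae_restrict_compl B1 ?_ ?_
    · refine (hcond_ae B1 _).mp ?_
      have h0 : 0 ≤ᵐ[(μ[|B1])] (μ[|B1])[A|MeasurableSpace.comap X inferInstance] := condExp_nonneg (Filter.Eventually.of_forall fun ω => by
        rcases hAbin ω with hw | hw <;> simp [hw])
      have h1 : (μ[|B1])[A|MeasurableSpace.comap X inferInstance] ≤ᵐ[(μ[|B1])] (μ[|B1])[(fun _ => (1:ℝ))|MeasurableSpace.comap X inferInstance] := condExp_mono hAint (integrable_const 1)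
        (Filter.Eventually.of_forall fun ω => by rcases hAbin ω with hw | hw <;> simp [hw])
      rw [condExp_const hXle] at h1
      filter_upwards [h0, h1, hedef] with ω a b hdef
      simp only [Pi.zero_apply] at a
      exact ⟨hdef ▸ a, hdef ▸ b⟩
    · rw [← hB0compl]
      refine (hcond_ae B0 _).mp ?_
      filter_upwards [hpos] with ω hp
      exact ⟨le_trans hc.le hp.2.1, hp.2.2⟩
  -- a.e. H ≠ 0
  have hHne : ∀ᵐ ω ∂μ, H ω ≠ 0 := by
    set Z : Set Ω := {ω | H ω = 0} with hZdef
    have hZG : MeasurableSet[MeasurableSpace.comap X inferInstance] Z := ⟨h ⁻¹' {0}, hhm (measurableSet_singleton 0), rfl⟩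
    have hZm : MeasurableSet Z := hXle Z hZG
    have hZsm : StronglyMeasurable[MeasurableSpace.comap X inferInstance] (Z.indicator (fun _ => (1:ℝ))) :=
      stronglyMeasurable_const.indicator hZG
    have h1 : ∫ ω, Z.indicator (fun _ => (1:ℝ)) ω * S ω ∂μ = 0 := by
      rw [aux_pullout hXle μ hZsm (M := 1) (Filter.Eventually.of_forall fun ω => by
        by_cases hw : ω ∈ Z <;> simp [Set.indicator_apply, hw]) hSint]
      have h2 : ∫ ω, Z.indicator (fun _ => (1:ℝ)) ω * (μ[S|MeasurableSpace.comap X inferInstance]) ω ∂μ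
          = ∫ ω, Z.indicator (fun _ => (1:ℝ)) ω * H ω ∂μ :=
        integral_congr_ae (by filter_upwards [hhdef] with ω hdef using by rw [hdef])
      rw [h2]
      have h3 : ∀ ω, Z.indicator (fun _ => (1:ℝ)) ω * H ω = 0 := by
        intro ω
        by_cases hw : ω ∈ Z
        · have : H ω = 0 := hw
          simp [this]
        · simp [Set.indicator_of_notMem hw]
      simp only [h3, integral_zero]
    have h4 : ∫ ω, Z.indicator (fun _ => (1:ℝ)) ω * S ω ∂μ = (μ (Z ∩ B1)).toReal := by
      rw [← measureReal_def, ← integral_indicator_one (hZm.inter hB1m)]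
      refine integral_congr_ae (Filter.Eventually.of_forall fun ω => ?_)
      by_cases hw : ω ∈ Z <;> rcases hSbin ω with hs | hs <;>
        simp [Set.indicator_apply, hw, hs, hB1def, Set.mem_inter_iff]
    have h5 : μ (Z ∩ B1) = 0 := by
      rcases (ENNReal.toReal_eq_zero_iff _).mp (h4.symm.trans h1) with h | h
      · exact h
      · exact absurd h (measure_ne_top μ _)
    refine ae_of_ae_restrict_of_ae_restrict_compl B1 ?_ ?_
    · rw [ae_restrict_iff' hB1m]
      have h6 : μ {ω | ¬ (ω ∈ B1 → H ω ≠ 0)} = 0 := by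
        refine measure_mono_null ?_ h5
        intro ω hω
        simp only [Set.mem_setOf_eq, Classical.not_imp, not_not] at hω
        exact ⟨hω.2, hω.1⟩
      exact (ae_iff).mpr h6
    · rw [← hB0compl]
      refine (hcond_ae B0 _).mp ?_
      filter_upwards [hpos] with ω hp
      exact ne_of_gt (lt_of_lt_of_le hc hp.1)
  -- weight functions
  set w : Ω → ℝ := fun ω => (1 - h (X ω)) / (h (X ω) * e (X ω)) with hwdef
  have hwsm : StronglyMeasurable[MeasurableSpace.comap X inferInstance] w :=
    hsmG (((measurable_const.sub hhm)).div (hhm.mul hem))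
  have hwmeas : Measurable w := (hwsm.mono hXle).measurable
  set wp : Ω → ℝ := fun ω => max (w ω) 0 with hwpdef
  have hwpmeas : Measurable wp := hwmeas.max measurable_const
  set kn : ℕ → Ω → ℝ := fun n ω => max (min (w ω) n) 0 with hkndef
  have hknsm : ∀ n, StronglyMeasurable[MeasurableSpace.comap X inferInstance] (kn n) := fun n =>
    aux_sm_comp hwsm ((measurable_id.min measurable_const).max measurable_const)
  have hknmeas : ∀ n, Measurable (kn n) := fun n => (hknsm n).mono hXle |>.measurable
  have hkn_nonneg : ∀ n ω, 0 ≤ kn n ω := fun n ω => le_max_right _ _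
  have hkn_le_n : ∀ n ω, kn n ω ≤ n := fun n ω =>
    max_le (min_le_right _ _) (Nat.cast_nonneg n)
  have hkn_le_wp : ∀ n ω, kn n ω ≤ wp ω := fun n ω =>
    max_le (le_max_of_le_left (min_le_left _ _)) (le_max_right _ _)
  have hkn_mono : ∀ ω, Monotone fun n => kn n ω := fun ω a b hab =>
    max_le_max (min_le_min le_rfl (Nat.cast_le.mpr hab)) le_rfl
  have hkn_tendsto : ∀ ω, Tendsto (fun n => kn n ω) atTop (nhds (wp ω)) := by
    intro ω
    refine tendsto_const_nhds.congr' ?_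
    rw [Filter.EventuallyEq, eventually_atTop]
    refine ⟨Nat.ceil (w ω), fun n hn => ?_⟩
    have : w ω ≤ (n : ℝ) := le_trans (Nat.le_ceil _) (Nat.cast_le.mpr hn)
    simp only [hkndef, hwpdef, min_eq_left this]
  set J : Ω → ℝ := fun ω => if e (X ω) = 0 then 0 else 1 with hJdef
  have hJsm : StronglyMeasurable[MeasurableSpace.comap X inferInstance] J :=
    hsmG (f := fun x => if e x = 0 then (0:ℝ) else 1)
      (Measurable.ite (hem (measurableSet_singleton 0)) measurable_const measurable_const)
  have hJmeas : Measurable J := (hJsm.mono hXle).measurable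
  have hJ01 : ∀ ω, J ω = 0 ∨ J ω = 1 := fun ω => by
    by_cases hw : e (X ω) = 0 <;> simp [hJdef, hw]
  -- pointwise facts under the a.e. pack
  have hpack : ∀ᵐ ω ∂μ, (0 ≤ H ω ∧ H ω ≤ 1) ∧ (0 ≤ E ω ∧ E ω ≤ 1) ∧ H ω ≠ 0 := by
    filter_upwards [hH01, hE01, hHne] with ω a b c using ⟨a, b, c⟩
  have hPfacts : ∀ ω, (0 ≤ H ω ∧ H ω ≤ 1) ∧ (0 ≤ E ω ∧ E ω ≤ 1) ∧ H ω ≠ 0 →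
      0 ≤ w ω ∧ wp ω = w ω ∧ H ω * E ω * wp ω = (1 - H ω) * J ω ∧
        H ω * E ω * wp ω ≤ 1 := by
    rintro ω ⟨⟨hH0, hH1⟩, ⟨hE0, hE1⟩, hHne'⟩
    have hHpos : 0 < H ω := lt_of_le_of_ne hH0 (Ne.symm hHne')
    by_cases hE : e (X ω) = 0
    · have hw0 : w ω = 0 := by
        simp only [hwdef]
        rw [hE, mul_zero, div_zero]
      have hwp0 : wp ω = 0 := by simp [hwpdef, hw0]
      have hJ0 : J ω = 0 := by simp [hJdef, hE]
      refine ⟨le_of_eq hw0.symm, by simp [hwpdef, hw0], ?_, ?_⟩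
      · rw [hwp0, hJ0]; ring
      · rw [hwp0]; norm_num
    · have hEne : E ω ≠ 0 := hE
      have hEpos : 0 < E ω := lt_of_le_of_ne hE0 (Ne.symm hEne)
      have hHE : H ω * E ω ≠ 0 := (mul_pos hHpos hEpos).ne'
      have hw_eq : w ω = (1 - H ω) / (H ω * E ω) := rfl
      have hwnn : 0 ≤ w ω := by
        rw [hw_eq]
        exact div_nonneg (by linarith) (mul_pos hHpos hEpos).le
      have hwp_eq : wp ω = w ω := max_eq_left hwnn
      have hJ1 : J ω = 1 := by simp [hJdef, hE]
      have hmain : H ω * E ω * wp ω = (1 - H ω) * J ω := by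
        rw [hwp_eq, hw_eq, hJ1, mul_one]
        field_simp
      refine ⟨hwnn, hwp_eq, hmain, ?_⟩
      rw [hmain, hJ1, mul_one]
      linarith
  -- the identity for each truncation level
  have hCn : ∀ (n : ℕ) (ψ : ℝ × ℝ → ℝ), Measurable ψ → (∀ ω, |ψ (V ω)| ≤ max Cb 1) →
      ∫ ω, S ω * (A ω * (kn n ω * ψ (V ω))) ∂μ
        = ∫ ω, H ω * (E ω * (kn n ω * ψ (V ω))) ∂μ := by
    intro n ψ hψ hψb
    have step1 : ∫ ω, S ω * (A ω * (kn n ω * ψ (V ω))) ∂μ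
        = (μ B1).toReal * ∫ ω, kn n ω * (A ω * ψ (V ω)) ∂(μ[|B1]) := by
      rw [hSmul]
      congr 1
      exact integral_congr_ae (Filter.Eventually.of_forall fun ω => by ring)
    have step2 : ∫ ω, kn n ω * (A ω * ψ (V ω)) ∂(μ[|B1])
        = ∫ ω, kn n ω * (E ω * ψ (V ω)) ∂(μ[|B1]) := by
      refine aux_factor_bin hXle (μ[|B1]) hV hA hAbin hexchA hψ hψb (hknsm n)
        (M' := n) (Filter.Eventually.of_forall fun ω => by
          rw [abs_of_nonneg (hkn_nonneg n ω)]; exact hkn_le_n n ω) hedef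
    have step3 : (μ B1).toReal * ∫ ω, kn n ω * (E ω * ψ (V ω)) ∂(μ[|B1])
        = ∫ ω, S ω * (E ω * (kn n ω * ψ (V ω))) ∂μ := by
      rw [hSmul]
      congr 1
      exact integral_congr_ae (Filter.Eventually.of_forall fun ω => by ring)
    have hEkn_sm : StronglyMeasurable[MeasurableSpace.comap X inferInstance] (fun ω => E ω * kn n ω) := hEsm.mul (hknsm n)
    have step4 : ∫ ω, (E ω * kn n ω) * (S ω * ψ (V ω)) ∂μ
        = ∫ ω, (E ω * kn n ω) * (H ω * ψ (V ω)) ∂μ := by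
      refine aux_factor_bin hXle μ hV hS hSbin hexchS hψ hψb hEkn_sm
        (M' := n) ?_ hhdef
      filter_upwards [hE01] with ω hE
      rw [abs_of_nonneg (mul_nonneg hE.1 (hkn_nonneg n ω))]
      calc E ω * kn n ω ≤ 1 * (n:ℝ) :=
        mul_le_mul hE.2 (hkn_le_n n ω) (hkn_nonneg n ω) zero_le_one
      _ = n := one_mul _
    calc ∫ ω, S ω * (A ω * (kn n ω * ψ (V ω))) ∂μ
        = (μ B1).toReal * ∫ ω, kn n ω * (A ω * ψ (V ω)) ∂(μ[|B1]) := step1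
      _ = (μ B1).toReal * ∫ ω, kn n ω * (E ω * ψ (V ω)) ∂(μ[|B1]) := by rw [step2]
      _ = ∫ ω, S ω * (E ω * (kn n ω * ψ (V ω))) ∂μ := step3
      _ = ∫ ω, (E ω * kn n ω) * (S ω * ψ (V ω)) ∂μ :=
          integral_congr_ae (Filter.Eventually.of_forall fun ω => by ring)
      _ = ∫ ω, (E ω * kn n ω) * (H ω * ψ (V ω)) ∂μ := step4
      _ = ∫ ω, H ω * (E ω * (kn n ω * ψ (V ω))) ∂μ :=
          integral_congr_ae (Filter.Eventually.of_forall fun ω => by ring)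

  -- convenient bound
  have hφb' : ∀ ω, |φ (V ω)| ≤ max Cb 1 := fun ω => le_trans (hφb ω) (le_max_left _ _)
  have h1b : ∀ ω : Ω, |(fun _ : ℝ × ℝ => (1:ℝ)) (V ω)| ≤ max Cb 1 := fun ω => by
    simp [le_max_right Cb 1]
  have hCb'pos : (0:ℝ) < max Cb 1 := lt_of_lt_of_le zero_lt_one (le_max_right _ _)
  -- a.e. package for the H E kn bounds
  have hHEbound : ∀ᵐ ω ∂μ, ∀ n : ℕ, 0 ≤ H ω * (E ω * (kn n ω * 1)) ∧
      H ω * (E ω * (kn n ω * 1)) ≤ 1 := by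
    filter_upwards [hpack] with ω hp
    obtain ⟨hw_nn, hwp_eq, hmain, hle1⟩ := hPfacts ω hp
    intro n
    have hHE_nn : 0 ≤ H ω * E ω := mul_nonneg hp.1.1 hp.2.1.1
    constructor
    · simp only [mul_one]
      exact mul_nonneg hp.1.1 (mul_nonneg hp.2.1.1 (hkn_nonneg n ω))
    · have : H ω * (E ω * (kn n ω * 1)) ≤ H ω * E ω * wp ω := by
        rw [mul_one, ← mul_assoc]
        exact mul_le_mul_of_nonneg_left (hkn_le_wp n ω) hHE_nn
      linarith
  -- integrability of the truncated integrands
  have hintS : ∀ (n : ℕ) (ψ : ℝ × ℝ → ℝ), Measurable ψ → (∀ ω, |ψ (V ω)| ≤ max Cb 1) →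
      Integrable (fun ω => S ω * (A ω * (kn n ω * ψ (V ω)))) μ := by
    intro n ψ hψ hψb
    refine integrable_of_bound μ ((n : ℝ) * max Cb 1)
      ((hS.mul (hA.mul ((hknmeas n).mul (hψ.comp hV)))).aestronglyMeasurable) ?_
    refine Filter.Eventually.of_forall fun ω => ?_
    have hb : |kn n ω * ψ (V ω)| ≤ (n : ℝ) * max Cb 1 := by
      rw [abs_mul, abs_of_nonneg (hkn_nonneg n ω)]
      exact mul_le_mul (hkn_le_n n ω) (hψb ω) (abs_nonneg _) (Nat.cast_nonneg n)
    have hnb : (0:ℝ) ≤ (n : ℝ) * max Cb 1 :=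
      mul_nonneg (Nat.cast_nonneg n) hCb'pos.le
    rcases hSbin ω with hs | hs <;> rcases hAbin ω with ha | ha <;>
      simp [hs, ha, hnb, hb, -abs_mul]
  have hintH : ∀ (n : ℕ) (ψ : ℝ × ℝ → ℝ), Measurable ψ → (∀ ω, |ψ (V ω)| ≤ max Cb 1) →
      Integrable (fun ω => H ω * (E ω * (kn n ω * ψ (V ω)))) μ := by
    intro n ψ hψ hψb
    refine integrable_of_bound μ (1 * max Cb 1)
      ((hHmeas.mul (hEmeas.mul ((hknmeas n).mul (hψ.comp hV)))).aestronglyMeasurable) ?_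
    filter_upwards [hpack, hHEbound] with ω hp hb
    have hH0 := hp.1.1
    have hE0 := hp.2.1.1
    have habs : |H ω * (E ω * (kn n ω * ψ (V ω)))|
        = (H ω * (E ω * (kn n ω * 1))) * |ψ (V ω)| := by
      rw [abs_mul, abs_mul, abs_mul, abs_of_nonneg hH0, abs_of_nonneg hE0,
        abs_of_nonneg (hkn_nonneg n ω)]
      ring
    rw [habs]
    calc (H ω * (E ω * (kn n ω * 1))) * |ψ (V ω)|
        ≤ 1 * |ψ (V ω)| := mul_le_mul_of_nonneg_right (hb n).2 (abs_nonneg _)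
      _ ≤ 1 * max Cb 1 := by rw [one_mul, one_mul]; exact hψb ω
  -- integrability of the limit ψ∞ = S A wp
  have hpsiInfnn : ∀ ω, 0 ≤ S ω * (A ω * (wp ω * 1)) := by
    intro ω
    rcases hSbin ω with hs | hs <;> rcases hAbin ω with ha | ha <;>
      simp [hs, ha] <;> exact le_max_right (w ω) 0
  have hpsiInfmeas : Measurable (fun ω => S ω * (A ω * (wp ω * 1))) :=
    hS.mul (hA.mul (hwpmeas.mul measurable_const))
  have hpsiInfint : Integrable (fun ω => S ω * (A ω * (wp ω * 1))) μ := by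
    have hψnnn : ∀ n ω, 0 ≤ S ω * (A ω * (kn n ω * 1)) := by
      intro n ω
      rcases hSbin ω with hs | hs <;> rcases hAbin ω with ha | ha <;>
        simp [hs, ha, hkn_nonneg n ω]
    have hmono : ∀ᵐ ω ∂μ, Monotone fun n => ENNReal.ofReal (S ω * (A ω * (kn n ω * 1))) := by
      refine Filter.Eventually.of_forall fun ω => fun a b hab => ?_
      refine ENNReal.ofReal_le_ofReal ?_
      rcases hSbin ω with hs | hs <;> rcases hAbin ω with ha | ha <;>
        simp [hs, ha, hkn_mono ω hab]
    have htend : ∀ᵐ ω ∂μ, Tendsto (fun n => ENNReal.ofReal (S ω * (A ω * (kn n ω * 1))))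
        atTop (nhds (ENNReal.ofReal (S ω * (A ω * (wp ω * 1))))) := by
      refine Filter.Eventually.of_forall fun ω => ?_
      refine (ENNReal.continuous_ofReal.tendsto _).comp ?_
      exact (((hkn_tendsto ω).mul_const 1).const_mul (A ω)).const_mul (S ω)
    have hlim := lintegral_tendsto_of_tendsto_of_monotone
      (fun n => ((hS.mul (hA.mul ((hknmeas n).mul measurable_const))).ennreal_ofReal).aemeasurable)
      hmono htend
    have hle : ∀ n, ∫⁻ ω, ENNReal.ofReal (S ω * (A ω * (kn n ω * 1))) ∂μ ≤ 1 := by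
      intro n
      rw [← ofReal_integral_eq_lintegral_ofReal (hintS n _ measurable_const h1b)
        (Filter.Eventually.of_forall (hψnnn n))]
      rw [hCn n _ measurable_const h1b]
      refine le_trans (ENNReal.ofReal_le_ofReal ?_) ENNReal.ofReal_one.le
      have hmono2 : ∫ ω, H ω * (E ω * (kn n ω * 1)) ∂μ ≤ ∫ _ω, (1:ℝ) ∂μ := by
        refine integral_mono_ae (hintH n _ measurable_const h1b) (integrable_const 1) ?_
        filter_upwards [hHEbound] with ω hb using (hb n).2
      simpa using hmono2
    have hfin : ∫⁻ ω, ENNReal.ofReal (S ω * (A ω * (wp ω * 1))) ∂μ ≤ 1 :=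
      le_of_tendsto hlim (Filter.Eventually.of_forall hle)
    refine ⟨hpsiInfmeas.aestronglyMeasurable, ?_⟩
    rw [hasFiniteIntegral_iff_ofReal (Filter.Eventually.of_forall hpsiInfnn)]
    exact lt_of_le_of_lt hfin ENNReal.one_lt_top
  -- dominated convergence on both sides
  have hDCTleft : Tendsto (fun n => ∫ ω, S ω * (A ω * (kn n ω * φ (V ω))) ∂μ) atTop
      (nhds (∫ ω, S ω * (A ω * (wp ω * φ (V ω))) ∂μ)) := by
    refine tendsto_integral_of_dominated_convergence
      (fun ω => max Cb 1 * (S ω * (A ω * (wp ω * 1))))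
      (fun n => (hS.mul (hA.mul ((hknmeas n).mul (hφ.comp hV)))).aestronglyMeasurable)
      (hpsiInfint.const_mul _) ?_ ?_
    · intro n
      refine Filter.Eventually.of_forall fun ω => ?_
      rw [Real.norm_eq_abs]
      rcases hSbin ω with hs | hs <;> rcases hAbin ω with ha | ha <;>
        simp only [hs, ha, zero_mul, one_mul, mul_zero, mul_one, abs_zero]
      · positivity
      · positivity
      · positivity
      · rw [abs_mul, abs_of_nonneg (hkn_nonneg n ω)]
        have h1 : kn n ω * |φ (V ω)| ≤ wp ω * max Cb 1 :=
          mul_le_mul (hkn_le_wp n ω) (hφb' ω) (abs_nonneg _) (le_max_right (w ω) 0)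
        have h2 : wp ω * max Cb 1 = max Cb 1 * (wp ω * 1) := by ring
        linarith [h1, h2.le]
    · refine Filter.Eventually.of_forall fun ω => ?_
      exact (((hkn_tendsto ω).mul_const (φ (V ω))).const_mul (A ω)).const_mul (S ω)
  have hDCTright : Tendsto (fun n => ∫ ω, H ω * (E ω * (kn n ω * φ (V ω))) ∂μ) atTop
      (nhds (∫ ω, H ω * (E ω * (wp ω * φ (V ω))) ∂μ)) := by
    refine tendsto_integral_of_dominated_convergence
      (fun _ => 1 * max Cb 1)
      (fun n => (hHmeas.mul (hEmeas.mul ((hknmeas n).mul (hφ.comp hV)))).aestronglyMeasurable)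
      (integrable_const _) ?_ ?_
    · intro n
      filter_upwards [hpack, hHEbound] with ω hp hb
      rw [Real.norm_eq_abs]
      have habs : |H ω * (E ω * (kn n ω * φ (V ω)))|
          = (H ω * (E ω * (kn n ω * 1))) * |φ (V ω)| := by
        rw [abs_mul, abs_mul, abs_mul, abs_of_nonneg hp.1.1, abs_of_nonneg hp.2.1.1,
          abs_of_nonneg (hkn_nonneg n ω)]
        ring
      rw [habs]
      calc (H ω * (E ω * (kn n ω * 1))) * |φ (V ω)|
          ≤ 1 * |φ (V ω)| := mul_le_mul_of_nonneg_right (hb n).2 (abs_nonneg _)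
        _ ≤ 1 * max Cb 1 := by rw [one_mul, one_mul]; exact hφb' ω
    · refine Filter.Eventually.of_forall fun ω => ?_
      exact (((hkn_tendsto ω).mul_const (φ (V ω))).const_mul (E ω)).const_mul (H ω)
  have hEqLim : ∫ ω, S ω * (A ω * (wp ω * φ (V ω))) ∂μ
      = ∫ ω, H ω * (E ω * (wp ω * φ (V ω))) ∂μ := by
    refine tendsto_nhds_unique ?_ hDCTright
    have hfe : (fun n => ∫ ω, S ω * (A ω * (kn n ω * φ (V ω))) ∂μ)
        = fun n => ∫ ω, H ω * (E ω * (kn n ω * φ (V ω))) ∂μ :=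
      funext fun n => hCn n φ hφ hφb'
    rw [← hfe]
    exact hDCTleft
  -- rewrite LHS of the goal
  have hLHS : ∫ ω, (if S ω = 1 ∧ A ω = 1 then (1:ℝ) else 0) *
      ((1 - h (X ω)) / (h (X ω) * e (X ω))) * Y ω ∂μ
      = ∫ ω, S ω * (A ω * (wp ω * φ (V ω))) ∂μ := by
    refine integral_congr_ae ?_
    filter_upwards [hpack] with ω hp
    obtain ⟨hw_nn, hwp_eq, _, _⟩ := hPfacts ω hp
    have hww : (1 - h (X ω)) / (h (X ω) * e (X ω)) = w ω := rfl
    rcases hSbin ω with hs | hs <;> rcases hAbin ω with ha | ha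
    · simp [hs, ha]
    · simp [hs, ha]
    · simp [hs, ha]
    · rw [if_pos ⟨hs, ha⟩, hs, ha, hww, hcons ω hs ha, hwp_eq]
      ring
  -- step to (1-H) J
  have hT2 : ∫ ω, H ω * (E ω * (wp ω * φ (V ω))) ∂μ
      = ∫ ω, (1 - H ω) * (J ω * φ (V ω)) ∂μ := by
    refine integral_congr_ae ?_
    filter_upwards [hpack] with ω hp
    obtain ⟨_, _, hmain, _⟩ := hPfacts ω hp
    have : H ω * (E ω * (wp ω * φ (V ω))) = (H ω * E ω * wp ω) * φ (V ω) := by ring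
    rw [this, hmain]
    ring
  -- integrabilities for the final splits
  have hJb : ∀ ω, |J ω| ≤ 1 := fun ω => by rcases hJ01 ω with hj | hj <;> simp [hj]
  have hintJφ : Integrable (fun ω => J ω * φ (V ω)) μ := by
    refine integrable_of_bound μ (1 * max Cb 1)
      ((hJmeas.mul (hφ.comp hV)).aestronglyMeasurable)
      (Filter.Eventually.of_forall fun ω => ?_)
    rw [abs_mul]
    exact mul_le_mul (hJb ω) (hφb' ω) (abs_nonneg _) zero_le_one
  have hintHJφ : Integrable (fun ω => H ω * (J ω * φ (V ω))) μ := by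
    refine integrable_of_bound μ (1 * (1 * max Cb 1))
      ((hHmeas.mul (hJmeas.mul (hφ.comp hV))).aestronglyMeasurable) ?_
    filter_upwards [hpack] with ω hp
    rw [abs_mul]
    refine mul_le_mul (abs_le.mpr ⟨by linarith [hp.1.1], hp.1.2⟩) ?_ (abs_nonneg _) zero_le_one
    rw [abs_mul]
    exact mul_le_mul (hJb ω) (hφb' ω) (abs_nonneg _) zero_le_one
  have hintSJφ : Integrable (fun ω => S ω * (J ω * φ (V ω))) μ := by
    refine integrable_of_bound μ (1 * (1 * max Cb 1))
      ((hS.mul (hJmeas.mul (hφ.comp hV))).aestronglyMeasurable)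
      (Filter.Eventually.of_forall fun ω => ?_)
    rw [abs_mul]
    refine mul_le_mul ?_ ?_ (abs_nonneg _) zero_le_one
    · rcases hSbin ω with hs | hs <;> simp [hs]
    · rw [abs_mul]
      exact mul_le_mul (hJb ω) (hφb' ω) (abs_nonneg _) zero_le_one
  -- swap H for S using the S-exchangeability
  have hT4 : ∫ ω, J ω * (S ω * φ (V ω)) ∂μ = ∫ ω, J ω * (H ω * φ (V ω)) ∂μ :=
    aux_factor_bin hXle μ hV hS hSbin hexchS hφ hφb' hJsm (M' := 1)
      (Filter.Eventually.of_forall hJb) hhdef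
  have hT3 : ∫ ω, (1 - H ω) * (J ω * φ (V ω)) ∂μ = ∫ ω, (1 - S ω) * (J ω * φ (V ω)) ∂μ := by
    have e1 : ∫ ω, (1 - H ω) * (J ω * φ (V ω)) ∂μ
        = ∫ ω, (J ω * φ (V ω)) - H ω * (J ω * φ (V ω)) ∂μ :=
      integral_congr_ae (Filter.Eventually.of_forall fun ω => by ring)
    have e2 : ∫ ω, (1 - S ω) * (J ω * φ (V ω)) ∂μ
        = ∫ ω, (J ω * φ (V ω)) - S ω * (J ω * φ (V ω)) ∂μ :=
      integral_congr_ae (Filter.Eventually.of_forall fun ω => by ring)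
    rw [e1, e2, integral_sub hintJφ hintHJφ, integral_sub hintJφ hintSJφ]
    congr 1
    have e3 : ∫ ω, H ω * (J ω * φ (V ω)) ∂μ = ∫ ω, J ω * (H ω * φ (V ω)) ∂μ :=
      integral_congr_ae (Filter.Eventually.of_forall fun ω => by ring)
    have e4 : ∫ ω, S ω * (J ω * φ (V ω)) ∂μ = ∫ ω, J ω * (S ω * φ (V ω)) ∂μ :=
      integral_congr_ae (Filter.Eventually.of_forall fun ω => by ring)
    rw [e3, e4, hT4]
  -- drop J against (1 - S)
  have hT6 : ∫ ω, (1 - S ω) * (J ω * φ (V ω)) ∂μ = ∫ ω, (1 - S ω) * φ (V ω) ∂μ := by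
    refine integral_congr_ae ?_
    refine ae_of_ae_restrict_of_ae_restrict_compl B1 ?_ ?_
    · rw [ae_restrict_iff' hB1m]
      refine Filter.Eventually.of_forall fun ω hω => ?_
      have hs : S ω = 1 := hω
      simp [hs]
    · rw [← hB0compl]
      refine (hcond_ae B0 _).mp ?_
      filter_upwards [hpos] with ω hp
      have : e (X ω) ≠ 0 := ne_of_gt (lt_of_lt_of_le hc hp.2.1)
      have hj : J ω = 1 := by simp [hJdef, this]
      rw [hj, one_mul]
  calc ∫ ω, (if S ω = 1 ∧ A ω = 1 then (1:ℝ) else 0) *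
        ((1 - h (X ω)) / (h (X ω) * e (X ω))) * Y ω ∂μ
      = ∫ ω, S ω * (A ω * (wp ω * φ (V ω))) ∂μ := hLHS
    _ = ∫ ω, H ω * (E ω * (wp ω * φ (V ω))) ∂μ := hEqLim
    _ = ∫ ω, (1 - H ω) * (J ω * φ (V ω)) ∂μ := hT2
    _ = ∫ ω, (1 - S ω) * (J ω * φ (V ω)) ∂μ := hT3
    _ = ∫ ω, (1 - S ω) * φ (V ω) ∂μ := hT6
    _ = (μ B0).toReal * ∫ ω, φ (V ω) ∂(μ[|B0]) := hS0mul _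
end Arm


/-- Under conditional exchangeability for study participation
(`(Y(1),Y(0)) ⟂ S | X`), conditional treatment exchangeability within the study
(`(Y(1),Y(0)) ⟂ A | X, S = 1`), consistency (`Y = Y(a)` when `S = 1, A = a`), and
positivity of both participation and treatment assignment, the target mean
`E[Y(a) | S = 0]` is identified by the inverse-probability-weighting formula
`E[I(S=1, A=a) (1−h(X)) / (h(X) e_a(X)) Y] / E[I(S=1, A=a) (1−h(X)) / (h(X) e_a(X))]`,
where `h(X) = P(S=1 | X)` and `e_a(X) = P(A=a | X, S=1)` (with `e_0 = 1 − e_1`). -/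
theorem ipw_identification_of_target_mean
    {Ω 𝒳 : Type*} [mΩ : MeasurableSpace Ω] [StandardBorelSpace Ω] [MeasurableSpace 𝒳]
    (μ : Measure Ω) [IsProbabilityMeasure μ]
    (X : Ω → 𝒳) (hX : Measurable X)
    (S A Y Y1 Y0 : Ω → ℝ)
    (hS : Measurable S) (hA : Measurable A) (hY : Measurable Y)
    (hY1 : Measurable Y1) (hY0 : Measurable Y0)
    (hSbin : ∀ ω, S ω = 0 ∨ S ω = 1) (hAbin : ∀ ω, A ω = 0 ∨ A ω = 1)
    (C : ℝ) (hbound : ∀ ω, |Y1 ω| ≤ C ∧ |Y0 ω| ≤ C)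
    -- consistency: the observed outcome is the potential outcome under the received
    -- treatment, for study participants
    (hconsist : ∀ ω, S ω = 1 → Y ω = A ω * Y1 ω + (1 - A ω) * Y0 ω)
    (hXle : MeasurableSpace.comap X inferInstance ≤ mΩ)
    -- conditional exchangeability for study participation: (Y(1), Y(0)) ⟂ S | X
    (hexchS : CondIndepFun (MeasurableSpace.comap X inferInstance) hXle
      (fun ω => (Y1 ω, Y0 ω)) S μ)
    -- conditional treatment exchangeability: (Y(1), Y(0)) ⟂ A | X within S = 1
    (hexchA : CondIndepFun (MeasurableSpace.comap X inferInstance) hXle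
      (fun ω => (Y1 ω, Y0 ω)) A (μ[|{ω | S ω = 1}]))
    -- the sampling score h(X) = P(S=1 | X) and the propensity score
    -- e₁(X) = P(A=1 | X, S=1), with e₀ = 1 − e₁
    (h e1 : 𝒳 → ℝ) (hhm : Measurable h) (he1m : Measurable e1)
    (hhdef : (fun ω => h (X ω)) =ᵐ[μ] μ[S | MeasurableSpace.comap X inferInstance])
    (he1def : (fun ω => e1 (X ω))
      =ᵐ[μ[|{ω | S ω = 1}]] (μ[|{ω | S ω = 1}])[A | MeasurableSpace.comap X inferInstance])
    -- positivity of participation and of treatment assignment on the target population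
    (c : ℝ) (hc : 0 < c)
    (hpos : ∀ᵐ ω ∂(μ[|{ω | S ω = 0}]),
      c ≤ h (X ω) ∧ c ≤ e1 (X ω) ∧ c ≤ 1 - e1 (X ω))
    (hS1pos : 0 < μ {ω | S ω = 1}) (hS0pos : 0 < μ {ω | S ω = 0}) :
    (∫ ω, Y1 ω ∂(μ[|{ω | S ω = 0}])) =
      (∫ ω, (if S ω = 1 ∧ A ω = 1 then (1 : ℝ) else 0) *
          ((1 - h (X ω)) / (h (X ω) * e1 (X ω))) * Y ω ∂μ) /
      (∫ ω, (if S ω = 1 ∧ A ω = 1 then (1 : ℝ) else 0) *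
          ((1 - h (X ω)) / (h (X ω) * e1 (X ω))) ∂μ) ∧
    (∫ ω, Y0 ω ∂(μ[|{ω | S ω = 0}])) =
      (∫ ω, (if S ω = 1 ∧ A ω = 0 then (1 : ℝ) else 0) *
          ((1 - h (X ω)) / (h (X ω) * (1 - e1 (X ω)))) * Y ω ∂μ) /
      (∫ ω, (if S ω = 1 ∧ A ω = 0 then (1 : ℝ) else 0) *
          ((1 - h (X ω)) / (h (X ω) * (1 - e1 (X ω)))) ∂μ) := by
  have hd0 : (μ {ω | S ω = 0}).toReal ≠ 0 :=
    (ENNReal.toReal_pos hS0pos.ne' (measure_ne_top μ _)).ne'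
  have hV : Measurable (fun ω => (Y1 ω, Y0 ω)) := hY1.prodMk hY0
  haveI hP1 : IsProbabilityMeasure (μ[|{ω | S ω = 1}]) :=
    cond_isProbabilityMeasure hS1pos.ne'
  haveI hP0 : IsProbabilityMeasure (μ[|{ω | S ω = 0}]) :=
    cond_isProbabilityMeasure hS0pos.ne'
  have hAint : Integrable A (μ[|{ω | S ω = 1}]) :=
    integrable_of_bound _ 1 hA.aestronglyMeasurable
      (Filter.Eventually.of_forall fun ω => by rcases hAbin ω with hw | hw <;> simp [hw])
  constructor
  · -- treated arm
    have hpos1 : ∀ᵐ ω ∂(μ[|{ω | S ω = 0}]),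
        c ≤ h (X ω) ∧ c ≤ e1 (X ω) ∧ e1 (X ω) ≤ 1 := by
      filter_upwards [hpos] with ω hp
      exact ⟨hp.1, hp.2.1, by linarith [hp.2.2, hc]⟩
    have hcons1 : ∀ ω, S ω = 1 → A ω = 1 → Y ω = Prod.fst ((fun ω => (Y1 ω, Y0 ω)) ω) := by
      intro ω hs ha
      rw [hconsist ω hs, ha]
      simp
    have harm := aux_arm μ X hX S A Y (fun ω => (Y1 ω, Y0 ω)) hS hA hY hV hSbin hAbin
      Prod.fst measurable_fst C (fun ω => (hbound ω).1) hcons1 hXle hexchS hexchA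
      h e1 hhm he1m hhdef he1def c hc hpos1 hS1pos hS0pos
    have hden := aux_arm μ X hX S A (fun _ => 1) (fun ω => (Y1 ω, Y0 ω)) hS hA
      measurable_const hV hSbin hAbin
      (fun _ => 1) measurable_const 1 (fun ω => by norm_num) (fun ω _ _ => rfl) hXle
      hexchS hexchA h e1 hhm he1m hhdef he1def c hc hpos1 hS1pos hS0pos
    have hden' : ∫ ω, (if S ω = 1 ∧ A ω = 1 then (1 : ℝ) else 0) *
        ((1 - h (X ω)) / (h (X ω) * e1 (X ω))) ∂μ = (μ {ω | S ω = 0}).toReal := by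
      have e1' : ∫ ω, (if S ω = 1 ∧ A ω = 1 then (1 : ℝ) else 0) *
          ((1 - h (X ω)) / (h (X ω) * e1 (X ω))) ∂μ
          = ∫ ω, (if S ω = 1 ∧ A ω = 1 then (1 : ℝ) else 0) *
          ((1 - h (X ω)) / (h (X ω) * e1 (X ω))) * (fun _ : Ω => (1:ℝ)) ω ∂μ :=
        integral_congr_ae (Filter.Eventually.of_forall fun ω => by simp)
      rw [e1', hden]
      simp
    rw [harm, hden']
    have : ∫ ω, Prod.fst ((fun ω => (Y1 ω, Y0 ω)) ω) ∂(μ[|{ω | S ω = 0}])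
        = ∫ ω, Y1 ω ∂(μ[|{ω | S ω = 0}]) := rfl
    rw [this, mul_comm, mul_div_assoc, div_self hd0, mul_one]
  · -- control arm
    have hA' : Measurable (fun ω => 1 - A ω) := measurable_const.sub hA
    have hA'bin : ∀ ω, (1 - A ω) = 0 ∨ (1 - A ω) = 1 := fun ω => by
      rcases hAbin ω with hw | hw <;> simp [hw]
    have hexchA' : CondIndepFun (MeasurableSpace.comap X inferInstance) hXle
        (fun ω => (Y1 ω, Y0 ω)) (fun ω => 1 - A ω) (μ[|{ω | S ω = 1}]) :=
      hexchA.comp measurable_id (measurable_const.sub measurable_id)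
    have he'def : (fun ω => (fun x => 1 - e1 x) (X ω))
        =ᵐ[μ[|{ω | S ω = 1}]]
          (μ[|{ω | S ω = 1}])[(fun ω => 1 - A ω) | MeasurableSpace.comap X inferInstance] := by
      have hsub : (μ[|{ω | S ω = 1}])[(fun _ : Ω => (1:ℝ)) - A
          | MeasurableSpace.comap X inferInstance]
          =ᵐ[μ[|{ω | S ω = 1}]]
          (μ[|{ω | S ω = 1}])[(fun _ : Ω => (1:ℝ)) | MeasurableSpace.comap X inferInstance]
            - (μ[|{ω | S ω = 1}])[A | MeasurableSpace.comap X inferInstance] :=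
        condExp_sub (integrable_const 1) hAint _
      rw [condExp_const hXle] at hsub
      have heq : (fun ω : Ω => 1 - A ω) = (fun _ : Ω => (1:ℝ)) - A := rfl
      rw [heq]
      filter_upwards [hsub, he1def] with ω h1 h2
      rw [h1]
      simp only [Pi.sub_apply]
      rw [← h2]
    have hpos0 : ∀ᵐ ω ∂(μ[|{ω | S ω = 0}]),
        c ≤ h (X ω) ∧ c ≤ (fun x => 1 - e1 x) (X ω) ∧ (fun x => 1 - e1 x) (X ω) ≤ 1 := by
      filter_upwards [hpos] with ω hp
      exact ⟨hp.1, hp.2.2, by simp; linarith [hp.2.1, hc]⟩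
    have hcons0 : ∀ ω, S ω = 1 → (1 - A ω) = 1 →
        Y ω = Prod.snd ((fun ω => (Y1 ω, Y0 ω)) ω) := by
      intro ω hs ha
      have hA0 : A ω = 0 := by linarith [ha]
      rw [hconsist ω hs, hA0]
      simp
    have harm := aux_arm μ X hX S (fun ω => 1 - A ω) Y (fun ω => (Y1 ω, Y0 ω)) hS hA' hY hV
      hSbin hA'bin Prod.snd measurable_snd C (fun ω => (hbound ω).2) hcons0 hXle hexchS hexchA'
      h (fun x => 1 - e1 x) hhm (measurable_const.sub he1m) hhdef he'def c hc hpos0 hS1pos hS0pos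
    have hden := aux_arm μ X hX S (fun ω => 1 - A ω) (fun _ => 1) (fun ω => (Y1 ω, Y0 ω)) hS hA'
      measurable_const hV hSbin hA'bin
      (fun _ => 1) measurable_const 1 (fun ω => by norm_num) (fun ω _ _ => rfl) hXle
      hexchS hexchA' h (fun x => 1 - e1 x) hhm (measurable_const.sub he1m) hhdef he'def
      c hc hpos0 hS1pos hS0pos
    have hiff : ∀ ω, (S ω = 1 ∧ A ω = 0) ↔ (S ω = 1 ∧ (1 - A ω) = 1) := by
      intro ω
      refine and_congr_right fun _ => ?_
      constructor <;> intro h' <;> linarith [h']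
    have hnum_eq : ∫ ω, (if S ω = 1 ∧ A ω = 0 then (1 : ℝ) else 0) *
        ((1 - h (X ω)) / (h (X ω) * (1 - e1 (X ω)))) * Y ω ∂μ
        = ∫ ω, (if S ω = 1 ∧ (fun ω => 1 - A ω) ω = 1 then (1 : ℝ) else 0) *
        ((1 - h (X ω)) / (h (X ω) * (fun x => 1 - e1 x) (X ω))) * Y ω ∂μ :=
      integral_congr_ae (Filter.Eventually.of_forall fun ω => by
        dsimp only
        rw [if_congr (hiff ω) rfl rfl])
    have hden_eq : ∫ ω, (if S ω = 1 ∧ A ω = 0 then (1 : ℝ) else 0) *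
        ((1 - h (X ω)) / (h (X ω) * (1 - e1 (X ω)))) ∂μ
        = ∫ ω, (if S ω = 1 ∧ (fun ω => 1 - A ω) ω = 1 then (1 : ℝ) else 0) *
        ((1 - h (X ω)) / (h (X ω) * (fun x => 1 - e1 x) (X ω))) * (fun _ : Ω => (1:ℝ)) ω ∂μ :=
      integral_congr_ae (Filter.Eventually.of_forall fun ω => by
        dsimp only
        rw [if_congr (hiff ω) rfl rfl, mul_one])
    rw [hnum_eq, hden_eq, harm, hden]
    have : ∫ ω, Prod.snd ((fun ω => (Y1 ω, Y0 ω)) ω) ∂(μ[|{ω | S ω = 0}])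
        = ∫ ω, Y0 ω ∂(μ[|{ω | S ω = 0}]) := rfl
    rw [this]
    have h1 : ∫ ω, (fun _ : ℝ × ℝ => (1:ℝ)) ((fun ω => (Y1 ω, Y0 ω)) ω) ∂(μ[|{ω | S ω = 0}])
        = 1 := by simp
    rw [h1, mul_one, mul_comm, mul_div_assoc, div_self hd0, mul_one]
end

section
/- The augmented weighting estimand τ_aw = E[w_1 R]/E[w_1] − E[w_0 R]/E[w_0] + E[μ_1(X) − μ_0(X) | S=0], with residual R = S(Y − A μ_1(X) − (1−A) μ_0(X)) and weights w_a = I(S=1,A=a)(1 − h(X))/(h(X) ẽ_a(X)), equals the true target ATE E[Y(1) − Y(0) | S=0] if the outcome models are correct (μ_a(X) = E[Y(a)|X] a.s.), even when the working sampling score h and working propensity score ẽ_a are misspecified (but bounded away from 0 and 1). -/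
open MeasureTheory ProbabilityTheory
open scoped ENNReal NNReal

namespace AWHelper

lemma intOfBdd {Ω : Type*} [mΩ : MeasurableSpace Ω] (ρ : Measure Ω) [IsFiniteMeasure ρ] {f : Ω → ℝ}
    (hf : Measurable f) {D : ℝ} (h : ∀ᵐ ω ∂ρ, |f ω| ≤ D) :
    Integrable f ρ :=
  Integrable.mono' (integrable_const D) hf.aestronglyMeasurable
    (h.mono fun ω hω => by simpa [Real.norm_eq_abs] using hω)

lemma intMulCondexp {Ω : Type*} {m : MeasurableSpace Ω} [mΩ : MeasurableSpace Ω]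
    (ρ : Measure Ω) [IsFiniteMeasure ρ] (hm : m ≤ mΩ)
    {v f : Ω → ℝ} (hv : StronglyMeasurable[m] v) (hf : Integrable f ρ)
    (hvf : Integrable (fun ω => v ω * f ω) ρ) :
    ∫ ω, v ω * f ω ∂ρ = ∫ ω, v ω * (ρ[f|m]) ω ∂ρ := by
  have h := condExp_mul_of_stronglyMeasurable_left (μ := ρ) hv (by exact hvf) hf
  calc ∫ ω, v ω * f ω ∂ρ = ∫ ω, (ρ[(fun ω => v ω * f ω)|m]) ω ∂ρ :=
        (integral_condExp hm).symm
    _ = ∫ ω, v ω * (ρ[f|m]) ω ∂ρ := integral_congr_ae (by exact h)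

lemma core {Ω : Type*} {m : MeasurableSpace Ω} [mΩ : MeasurableSpace Ω]
    [StandardBorelSpace Ω] (ρ : Measure Ω) [IsProbabilityMeasure ρ] (hm : m ≤ mΩ)
    {P : Ω → ℝ × ℝ} (hP : Measurable P) {W : Ω → ℝ} (hW : Measurable W)
    (hCI : CondIndepFun m hm P W ρ) (t : ℝ)
    {u : Ω → ℝ} (hu : StronglyMeasurable[m] u) (hu0 : ∀ ω, 0 ≤ u ω)
    {B : ℝ} (huB : ∀ ω, u ω ≤ B)
    {φ : ℝ × ℝ → ℝ} (hφ : Measurable φ) :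
    ∫ ω, u ω * (W ⁻¹' {t}).indicator (fun _ => (1:ℝ)) ω * φ (P ω) ∂ρ
      = ∫ ω, u ω * (ρ[(W ⁻¹' {t}).indicator (fun _ => (1:ℝ))|m]) ω * φ (P ω) ∂ρ := by
  set T : Set Ω := W ⁻¹' {t} with hTdef
  have hT : MeasurableSet T := hW (measurableSet_singleton t)
  set iT : Ω → ℝ := T.indicator (fun _ => (1:ℝ)) with hiTdef
  set q : Ω → ℝ := ρ[iT|m] with hq
  have huM : Measurable u := fun t ht => hm _ (hu.measurable ht)
  have hiT_M : Measurable iT := measurable_const.indicator hT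
  have hiT_bd : ∀ ω, |iT ω| ≤ 1 := fun ω => by
    by_cases h : ω ∈ T <;> simp [iT, Set.indicator_of_mem, Set.indicator_of_notMem, h]
  have hiT_nn : ∀ ω, 0 ≤ iT ω := fun ω => by
    by_cases h : ω ∈ T <;> simp [iT, Set.indicator_of_mem, Set.indicator_of_notMem, h]
  have hqSM : StronglyMeasurable[m] q := stronglyMeasurable_condExp
  have hqM : Measurable q := fun t ht => hm _ (hqSM.measurable ht)
  have hiT_int : Integrable iT ρ := intOfBdd ρ hiT_M (ae_of_all _ hiT_bd)
  have hq_bd : ∀ᵐ ω ∂ρ, |q ω| ≤ 1 := by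
    have h1 : ∀ᵐ ω ∂ρ, |iT ω| ≤ ((1:ℝ≥0) : ℝ) := ae_of_all _ fun ω => by
      simpa using hiT_bd ω
    simpa using ae_bdd_condExp_of_ae_bdd (m := m) h1
  have hq_nn : 0 ≤ᵐ[ρ] q := condExp_nonneg (ae_of_all _ hiT_nn)
  set q' : Ω → ℝ := fun ω => max (q ω) 0 with hq'def
  have hq'M : Measurable q' := hqM.max measurable_const
  have hq'_eq : q' =ᵐ[ρ] q := hq_nn.mono fun ω hω => max_eq_left hω
  have hq'_nn : ∀ ω, 0 ≤ q' ω := fun ω => le_max_right _ _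
  -- key set-wise integral identity
  have key : ∀ s : Set (ℝ × ℝ), MeasurableSet s →
      ∫ ω, (P ⁻¹' s).indicator (fun _ => (1:ℝ)) ω * (u ω * iT ω) ∂ρ
        = ∫ ω, (P ⁻¹' s).indicator (fun _ => (1:ℝ)) ω * (u ω * q' ω) ∂ρ := by
    intro s hs
    set iS : Ω → ℝ := (P ⁻¹' s).indicator (fun _ => (1:ℝ)) with hiS
    have hSmeas : MeasurableSet (P ⁻¹' s) := hP hs
    have hiS_bd : ∀ ω, |iS ω| ≤ 1 := fun ω => by
      by_cases h : ω ∈ P ⁻¹' s <;> simp [iS, Set.indicator_of_mem, Set.indicator_of_notMem, h]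
    have hiS_M : Measurable iS := measurable_const.indicator hSmeas
    have hiS_int : Integrable iS ρ := intOfBdd ρ hiS_M (ae_of_all _ hiS_bd)
    set iST : Ω → ℝ := (P ⁻¹' s ∩ T).indicator (fun _ => (1:ℝ)) with hiST
    have hiST_bd : ∀ ω, |iST ω| ≤ 1 := fun ω => by
      by_cases h : ω ∈ P ⁻¹' s ∩ T <;>
        simp [iST, Set.indicator_of_mem, Set.indicator_of_notMem, h]
    have hiST_M : Measurable iST := measurable_const.indicator (hSmeas.inter hT)
    have hiST_int : Integrable iST ρ := intOfBdd ρ hiST_M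
      (ae_of_all _ hiST_bd)
    have h1 : ∀ ω, iS ω * (u ω * iT ω) = u ω * iST ω := by
      intro ω
      by_cases ha : ω ∈ P ⁻¹' s <;> by_cases hb : ω ∈ T <;>
        simp [iS, iT, iST, Set.indicator_of_mem, Set.indicator_of_notMem, ha, hb,
          Set.mem_inter_iff]
    have hfact := (condIndepFun_iff_condExp_inter_preimage_eq_mul (μ := ρ) (hm' := hm)
      hP hW).mp hCI s {t} hs (measurableSet_singleton t)
    have huiST_int : Integrable (fun ω => u ω * iST ω) ρ :=
      intOfBdd ρ (huM.mul hiST_M)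
        (ae_of_all _ fun ω => by
          rw [abs_mul, abs_of_nonneg (hu0 ω)]
          nlinarith [hiST_bd ω, abs_nonneg (iST ω), huB ω, hu0 ω])
    have huq_SM : StronglyMeasurable[m] (fun ω => u ω * q ω) := hu.mul hqSM
    have huqiS_int : Integrable (fun ω => (u ω * q ω) * iS ω) ρ :=
      intOfBdd ρ ((huM.mul hqM).mul hiS_M)
        ((hq_bd.mono fun ω hω => by
          rw [abs_mul, abs_mul, abs_of_nonneg (hu0 ω)]
          calc u ω * |q ω| * |iS ω| ≤ u ω * |q ω| * 1 :=
                mul_le_mul_of_nonneg_left (hiS_bd ω) (mul_nonneg (hu0 ω) (abs_nonneg _))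
            _ = u ω * |q ω| := mul_one _
            _ ≤ B * 1 := mul_le_mul (huB ω) hω (abs_nonneg _) (le_trans (hu0 ω) (huB ω))
            _ = B := mul_one _) :
          ∀ᵐ ω ∂ρ, |(u ω * q ω) * iS ω| ≤ B)
    calc ∫ ω, iS ω * (u ω * iT ω) ∂ρ
        = ∫ ω, u ω * iST ω ∂ρ := by
          exact integral_congr_ae (ae_of_all _ h1)
      _ = ∫ ω, u ω * (ρ[iST|m]) ω ∂ρ := intMulCondexp ρ hm hu hiST_int huiST_int
      _ = ∫ ω, (u ω * q ω) * (ρ[iS|m]) ω ∂ρ := by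
          refine integral_congr_ae ?_
          filter_upwards [hfact] with ω hω
          have : (ρ[iST|m]) ω = (ρ[iS|m]) ω * q ω := hω
          rw [this]; ring
      _ = ∫ ω, (u ω * q ω) * iS ω ∂ρ :=
          (intMulCondexp ρ hm huq_SM hiS_int huqiS_int).symm
      _ = ∫ ω, iS ω * (u ω * q' ω) ∂ρ := by
          refine integral_congr_ae ?_
          filter_upwards [hq'_eq] with ω hω
          rw [hω]; ring
  -- build the two pushforward measures and show they are equal
  set d1 : Ω → ℝ≥0 := fun ω => Real.toNNReal (u ω * iT ω) with hd1
  set d2 : Ω → ℝ≥0 := fun ω => Real.toNNReal (u ω * q' ω) with hd2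
  have hd1M : Measurable d1 := (huM.mul hiT_M).real_toNNReal
  have hd2M : Measurable d2 := (huM.mul hq'M).real_toNNReal
  have hint1 : Integrable (fun ω => u ω * iT ω) ρ :=
    intOfBdd ρ (huM.mul hiT_M)
      (ae_of_all _ fun ω => by
        rw [abs_mul, abs_of_nonneg (hu0 ω)]
        nlinarith [hiT_bd ω, abs_nonneg (iT ω), huB ω, hu0 ω])
  have hint2 : Integrable (fun ω => u ω * q' ω) ρ :=
    intOfBdd ρ (huM.mul hq'M) (D := B) <| by
      filter_upwards [hq_bd, hq'_eq] with ω h1 h2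
      rw [abs_mul, abs_of_nonneg (hu0 ω), h2]
      nlinarith [abs_nonneg (q ω), huB ω, hu0 ω]
  have hmeq : (ρ.withDensity (fun ω => (d1 ω : ℝ≥0∞))).map P
      = (ρ.withDensity (fun ω => (d2 ω : ℝ≥0∞))).map P := by
    refine Measure.ext fun s hs => ?_
    have hSmeas : MeasurableSet (P ⁻¹' s) := hP hs
    rw [Measure.map_apply hP hs, Measure.map_apply hP hs,
      withDensity_apply _ hSmeas, withDensity_apply _ hSmeas]
    have e1 : ∫⁻ ω in P ⁻¹' s, (d1 ω : ℝ≥0∞) ∂ρ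
        = ENNReal.ofReal (∫ ω in P ⁻¹' s, u ω * iT ω ∂ρ) := by
      rw [ofReal_integral_eq_lintegral_ofReal hint1.restrict
        (ae_of_all _ fun ω => mul_nonneg (hu0 ω) (hiT_nn ω))]
      rfl
    have e2 : ∫⁻ ω in P ⁻¹' s, (d2 ω : ℝ≥0∞) ∂ρ
        = ENNReal.ofReal (∫ ω in P ⁻¹' s, u ω * q' ω ∂ρ) := by
      rw [ofReal_integral_eq_lintegral_ofReal hint2.restrict
        (ae_of_all _ fun ω => mul_nonneg (hu0 ω) (hq'_nn ω))]
      rfl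
    rw [e1, e2]
    congr 1
    have e3 : ∀ g : Ω → ℝ, ∫ ω in P ⁻¹' s, g ω ∂ρ
        = ∫ ω, (P ⁻¹' s).indicator (fun _ => (1:ℝ)) ω * g ω ∂ρ := by
      intro g
      rw [← integral_indicator hSmeas]
      refine integral_congr_ae (ae_of_all _ fun ω => ?_)
      by_cases h : ω ∈ P ⁻¹' s <;>
        simp [Set.indicator_of_mem, Set.indicator_of_notMem, h]
    rw [e3, e3]
    exact key s hs
  -- conclude by integrating φ against the two equal measures
  have w1 : ∫ ω, φ (P ω) ∂(ρ.withDensity (fun ω => (d1 ω : ℝ≥0∞)))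
      = ∫ ω, (u ω * iT ω) * φ (P ω) ∂ρ := by
    rw [integral_withDensity_eq_integral_smul hd1M (fun ω => φ (P ω))]
    refine integral_congr_ae (ae_of_all _ fun ω => ?_)
    show d1 ω • φ (P ω) = u ω * iT ω * φ (P ω)
    rw [NNReal.smul_def, smul_eq_mul, Real.coe_toNNReal _ (mul_nonneg (hu0 ω) (hiT_nn ω))]
  have w2 : ∫ ω, φ (P ω) ∂(ρ.withDensity (fun ω => (d2 ω : ℝ≥0∞)))
      = ∫ ω, (u ω * q' ω) * φ (P ω) ∂ρ := by
    rw [integral_withDensity_eq_integral_smul hd2M (fun ω => φ (P ω))]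
    refine integral_congr_ae (ae_of_all _ fun ω => ?_)
    show d2 ω • φ (P ω) = u ω * q' ω * φ (P ω)
    rw [NNReal.smul_def, smul_eq_mul, Real.coe_toNNReal _ (mul_nonneg (hu0 ω) (hq'_nn ω))]
  have hmap : ∫ ω, (u ω * iT ω) * φ (P ω) ∂ρ = ∫ ω, (u ω * q' ω) * φ (P ω) ∂ρ := by
    rw [← w1, ← w2]
    rw [← integral_map hP.aemeasurable hφ.aestronglyMeasurable,
      ← integral_map hP.aemeasurable hφ.aestronglyMeasurable, hmeq]
  calc ∫ ω, u ω * iT ω * φ (P ω) ∂ρ = ∫ ω, (u ω * q' ω) * φ (P ω) ∂ρ := hmap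
    _ = ∫ ω, u ω * q ω * φ (P ω) ∂ρ := by
        refine integral_congr_ae ?_
        filter_upwards [hq'_eq] with ω hω
        rw [hω]

lemma cond_integral {Ω : Type*} [mΩ : MeasurableSpace Ω] (μ : Measure Ω)
    {s : Set Ω} (hs : MeasurableSet s) (f : Ω → ℝ) :
    ∫ ω, f ω ∂(μ[|s]) = (μ s).toReal⁻¹ * ∫ ω, s.indicator (fun _ => (1:ℝ)) ω * f ω ∂μ := by
  rw [ProbabilityTheory.cond, integral_smul_measure, ENNReal.toReal_inv]
  rw [smul_eq_mul]
  congr 1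
  rw [← integral_indicator hs]
  refine integral_congr_ae (ae_of_all _ fun ω => ?_)
  by_cases hω : ω ∈ s <;>
    simp [Set.indicator_of_mem, Set.indicator_of_notMem, hω]

/-- Main workhorse: under conditional independence of `P` and `W` given `m`,
with `M` a version of `E[φ∘P | m]`, weighted indicator integrals can replace
`φ∘P` by `M`. -/
lemma swap {Ω : Type*} {m : MeasurableSpace Ω} [mΩ : MeasurableSpace Ω]
    [StandardBorelSpace Ω] (ρ : Measure Ω) [IsProbabilityMeasure ρ] (hm : m ≤ mΩ)
    {P : Ω → ℝ × ℝ} (hP : Measurable P) {W : Ω → ℝ} (hW : Measurable W)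
    (hCI : CondIndepFun m hm P W ρ) (t : ℝ)
    {u : Ω → ℝ} (hu : StronglyMeasurable[m] u) (hu0 : ∀ ω, 0 ≤ u ω)
    {B : ℝ} (huB : ∀ ω, u ω ≤ B)
    {φ : ℝ × ℝ → ℝ} (hφ : Measurable φ) {D : ℝ} (hφD : ∀ p, |φ p| ≤ D)
    {M : Ω → ℝ} (hMsm : StronglyMeasurable[m] M)
    (hMce : M =ᵐ[ρ] ρ[(fun ω => φ (P ω))|m]) :
    ∫ ω, u ω * (W ⁻¹' {t}).indicator (fun _ => (1:ℝ)) ω * φ (P ω) ∂ρ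
      = ∫ ω, u ω * (W ⁻¹' {t}).indicator (fun _ => (1:ℝ)) ω * M ω ∂ρ := by
  set T : Set Ω := W ⁻¹' {t} with hTdef
  have hT : MeasurableSet T := hW (measurableSet_singleton t)
  set iT : Ω → ℝ := T.indicator (fun _ => (1:ℝ)) with hiTdef
  set q : Ω → ℝ := ρ[iT|m] with hqdef
  have hD0 : 0 ≤ D := le_trans (abs_nonneg _) (hφD (0, 0))
  have huM : Measurable u := fun s hs => hm _ (hu.measurable hs)
  have hMM : Measurable M := fun s hs => hm _ (hMsm.measurable hs)
  have hiT_M : Measurable iT := measurable_const.indicator hT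
  have hiT_bd : ∀ ω, |iT ω| ≤ 1 := fun ω => by
    by_cases h : ω ∈ T <;> simp [iT, Set.indicator_of_mem, Set.indicator_of_notMem, h]
  have hiT_nn : ∀ ω, 0 ≤ iT ω := fun ω => by
    by_cases h : ω ∈ T <;> simp [iT, Set.indicator_of_mem, Set.indicator_of_notMem, h]
  have hiT_int : Integrable iT ρ := intOfBdd ρ hiT_M (ae_of_all _ hiT_bd)
  have hqSM : StronglyMeasurable[m] q := stronglyMeasurable_condExp
  have hqM : Measurable q := fun s hs => hm _ (hqSM.measurable hs)
  have hq_bd : ∀ᵐ ω ∂ρ, |q ω| ≤ 1 := by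
    have h1 : ∀ᵐ ω ∂ρ, |iT ω| ≤ ((1:ℝ≥0) : ℝ) := ae_of_all _ fun ω => by
      simpa using hiT_bd ω
    simpa using ae_bdd_condExp_of_ae_bdd (m := m) h1
  have hφP_M : Measurable (fun ω => φ (P ω)) := hφ.comp hP
  have hφP_int : Integrable (fun ω => φ (P ω)) ρ :=
    intOfBdd ρ hφP_M (ae_of_all _ fun ω => hφD _)
  have hM_bd : ∀ᵐ ω ∂ρ, |M ω| ≤ D := by
    have h1 : ∀ᵐ ω ∂ρ, |φ (P ω)| ≤ ((D.toNNReal : ℝ≥0) : ℝ) := ae_of_all _ fun ω => by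
      rw [Real.coe_toNNReal _ hD0]; exact hφD _
    have h2 := ae_bdd_condExp_of_ae_bdd (m := m) h1
    filter_upwards [hMce, h2] with ω h3 h4
    rw [h3]
    calc |(ρ[(fun ω => φ (P ω))|m]) ω| ≤ ((D.toNNReal : ℝ≥0) : ℝ) := h4
      _ = D := Real.coe_toNNReal _ hD0
  have hint_uqφ : Integrable (fun ω => u ω * q ω * φ (P ω)) ρ :=
    intOfBdd ρ ((huM.mul hqM).mul hφP_M) (D := B * D) <| by
      filter_upwards [hq_bd] with ω hω
      have hB0 : 0 ≤ B := le_trans (hu0 ω) (huB ω)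
      rw [abs_mul, abs_mul, abs_of_nonneg (hu0 ω)]
      calc u ω * |q ω| * |φ (P ω)| ≤ u ω * |q ω| * D :=
            mul_le_mul_of_nonneg_left (hφD _) (mul_nonneg (hu0 ω) (abs_nonneg _))
        _ ≤ (B * 1) * D :=
            mul_le_mul_of_nonneg_right
              (mul_le_mul (huB ω) hω (abs_nonneg _) hB0) hD0
        _ = B * D := by rw [mul_one]
  have hint_uMiT : Integrable (fun ω => u ω * M ω * iT ω) ρ :=
    intOfBdd ρ ((huM.mul hMM).mul hiT_M) (D := B * D) <| by
      filter_upwards [hM_bd] with ω hω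
      have hB0 : 0 ≤ B := le_trans (hu0 ω) (huB ω)
      rw [abs_mul, abs_mul, abs_of_nonneg (hu0 ω)]
      calc u ω * |M ω| * |iT ω| ≤ u ω * |M ω| * 1 :=
            mul_le_mul_of_nonneg_left (hiT_bd _) (mul_nonneg (hu0 ω) (abs_nonneg _))
        _ = u ω * |M ω| := mul_one _
        _ ≤ B * D := mul_le_mul (huB ω) hω (abs_nonneg _) hB0
  have step1 := core ρ hm hP hW hCI t hu hu0 huB hφ
  have step2 : ∫ ω, u ω * q ω * φ (P ω) ∂ρ = ∫ ω, u ω * q ω * M ω ∂ρ := by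
    have h1 : ∫ ω, u ω * q ω * φ (P ω) ∂ρ
        = ∫ ω, u ω * q ω * (ρ[(fun ω => φ (P ω))|m]) ω ∂ρ := by
      exact intMulCondexp ρ hm (hu.mul hqSM) hφP_int hint_uqφ
    rw [h1]
    refine integral_congr_ae ?_
    filter_upwards [hMce] with ω hω
    rw [← hω]
  have step3 : ∫ ω, u ω * q ω * M ω ∂ρ = ∫ ω, u ω * M ω * iT ω ∂ρ := by
    have h2 : ∫ ω, u ω * M ω * iT ω ∂ρ
        = ∫ ω, u ω * M ω * (ρ[iT|m]) ω ∂ρ := by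
      exact intMulCondexp ρ hm (hu.mul hMsm) hiT_int hint_uMiT
    rw [h2]
    exact integral_congr_ae (ae_of_all _ fun ω => by ring)
  calc ∫ ω, u ω * iT ω * φ (P ω) ∂ρ = ∫ ω, u ω * q ω * φ (P ω) ∂ρ := step1
    _ = ∫ ω, u ω * M ω * iT ω ∂ρ := step2.trans step3
    _ = ∫ ω, u ω * iT ω * M ω ∂ρ := integral_congr_ae (ae_of_all _ fun ω => by ring)

end AWHelper

open AWHelper

/-- The augmented weighting estimand
`τ_aw = E[w₁R]/E[w₁] − E[w₀R]/E[w₀] + E[μ₁(X) − μ₀(X) | S=0]`, with residual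
`R = S(Y − Aμ₁(X) − (1−A)μ₀(X))` and weights `w_a = I(S=1,A=a)(1−h(X))/(h(X)ẽ_a(X))`,
equals the true target ATE `E[Y(1) − Y(0) | S=0]` if the outcome models are correct
(`μ_a(X) = E[Y(a)|X]` a.s.), even when the working sampling score `h` and working
propensity scores `ẽ_a` are misspecified (but bounded away from 0 and 1). -/
theorem augmented_weighting_outcome_model_correct
    {Ω 𝒳 : Type*} [mΩ : MeasurableSpace Ω] [StandardBorelSpace Ω] [MeasurableSpace 𝒳]
    (μ : Measure Ω) [IsProbabilityMeasure μ]
    (X : Ω → 𝒳) (hX : Measurable X)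
    (S A Y Y1 Y0 : Ω → ℝ)
    (hS : Measurable S) (hA : Measurable A) (hY : Measurable Y)
    (hY1 : Measurable Y1) (hY0 : Measurable Y0)
    (hSbin : ∀ ω, S ω = 0 ∨ S ω = 1) (hAbin : ∀ ω, A ω = 0 ∨ A ω = 1)
    (C : ℝ) (hbound : ∀ ω, |Y1 ω| ≤ C ∧ |Y0 ω| ≤ C)
    (hconsist : ∀ ω, S ω = 1 → Y ω = A ω * Y1 ω + (1 - A ω) * Y0 ω)
    (hXle : MeasurableSpace.comap X inferInstance ≤ mΩ)
    (hexchS : CondIndepFun (MeasurableSpace.comap X inferInstance) hXle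
      (fun ω => (Y1 ω, Y0 ω)) S μ)
    (hexchA : CondIndepFun (MeasurableSpace.comap X inferInstance) hXle
      (fun ω => (Y1 ω, Y0 ω)) A (μ[|{ω | S ω = 1}]))
    (hS1pos : 0 < μ {ω | S ω = 1}) (hS0pos : 0 < μ {ω | S ω = 0})
    -- working (possibly misspecified) sampling and propensity scores,
    -- bounded away from 0 and 1, with ẽ₁ + ẽ₀ = 1
    (c : ℝ) (hc : 0 < c)
    (ht te1 te0 : 𝒳 → ℝ) (htm : Measurable ht) (hte1m : Measurable te1)
    (hte0m : Measurable te0)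
    (hsum : ∀ x, te1 x + te0 x = 1)
    (htb : ∀ x, c < ht x ∧ ht x < 1 - c)
    (hteb : ∀ x, c < te1 x ∧ te1 x < 1 ∧ c < te0 x ∧ te0 x < 1)
    -- correctly specified outcome regressions: μ_a(X) = E[Y(a) | X] a.s.
    (m1 m0 : 𝒳 → ℝ) (hm1m : Measurable m1) (hm0m : Measurable m0)
    (hm1 : (fun ω => m1 (X ω)) =ᵐ[μ] μ[Y1 | MeasurableSpace.comap X inferInstance])
    (hm0 : (fun ω => m0 (X ω)) =ᵐ[μ] μ[Y0 | MeasurableSpace.comap X inferInstance])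
    (R : Ω → ℝ)
    (hR : ∀ ω, R ω = S ω * (Y ω - A ω * m1 (X ω) - (1 - A ω) * m0 (X ω)))
    (w1 w0 : Ω → ℝ)
    (hw1 : ∀ ω, w1 ω = (if S ω = 1 ∧ A ω = 1 then (1 : ℝ) else 0) *
      ((1 - ht (X ω)) / (ht (X ω) * te1 (X ω))))
    (hw0 : ∀ ω, w0 ω = (if S ω = 1 ∧ A ω = 0 then (1 : ℝ) else 0) *
      ((1 - ht (X ω)) / (ht (X ω) * te0 (X ω))))
    (τaw : ℝ)
    (hτaw : τaw = (∫ ω, w1 ω * R ω ∂μ) / (∫ ω, w1 ω ∂μ)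
      - (∫ ω, w0 ω * R ω ∂μ) / (∫ ω, w0 ω ∂μ)
      + ∫ ω, (m1 (X ω) - m0 (X ω)) ∂(μ[|{ω | S ω = 0}])) :
    τaw = ∫ ω, (Y1 ω - Y0 ω) ∂(μ[|{ω | S ω = 0}]) := by
  classical
  -- notation
  have hcomapX : Measurable[MeasurableSpace.comap X inferInstance] X :=
    Measurable.of_comap_le le_rfl
  have hsm : ∀ {g : 𝒳 → ℝ}, Measurable g →
      StronglyMeasurable[MeasurableSpace.comap X inferInstance] (fun ω => g (X ω)) :=
    fun {g} hg => ((hg.comp hcomapX).stronglyMeasurable)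
  have hT1 : {ω | S ω = 1} = S ⁻¹' {1} := rfl
  have hT0 : {ω | S ω = 0} = S ⁻¹' {0} := rfl
  rw [hT1] at hS1pos hexchA
  rw [hT0] at hS0pos hτaw ⊢
  have hT1m : MeasurableSet (S ⁻¹' {1}) := hS (measurableSet_singleton 1)
  have hT0m : MeasurableSet (S ⁻¹' {0}) := hS (measurableSet_singleton 0)
  obtain ⟨ω₀, -⟩ := MeasureTheory.nonempty_of_measure_ne_zero hS1pos.ne'
  have hC0 : (0:ℝ) ≤ C := le_trans (abs_nonneg _) (hbound ω₀).1
  -- truncations realizing Y1, Y0 as bounded functions of the pair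
  set φ1 : ℝ × ℝ → ℝ := fun p => max (-C) (min p.1 C) with hφ1def
  set φ0 : ℝ × ℝ → ℝ := fun p => max (-C) (min p.2 C) with hφ0def
  have hφ1m : Measurable φ1 := measurable_const.max (measurable_fst.min measurable_const)
  have hφ0m : Measurable φ0 := measurable_const.max (measurable_snd.min measurable_const)
  have hφ1D : ∀ p, |φ1 p| ≤ C := fun p =>
    abs_le.mpr ⟨le_max_left _ _, max_le (by linarith) (min_le_right _ _)⟩
  have hφ0D : ∀ p, |φ0 p| ≤ C := fun p =>
    abs_le.mpr ⟨le_max_left _ _, max_le (by linarith) (min_le_right _ _)⟩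
  have hφ1Y : ∀ ω, φ1 (Y1 ω, Y0 ω) = Y1 ω := fun ω => by
    have h := abs_le.mp (hbound ω).1
    show max (-C) (min (Y1 ω) C) = Y1 ω
    rw [min_eq_left h.2, max_eq_right h.1]
  have hφ0Y : ∀ ω, φ0 (Y1 ω, Y0 ω) = Y0 ω := fun ω => by
    have h := abs_le.mp (hbound ω).2
    show max (-C) (min (Y0 ω) C) = Y0 ω
    rw [min_eq_left h.2, max_eq_right h.1]
  have hφ1Yf : (fun ω => φ1 ((fun ω => (Y1 ω, Y0 ω)) ω)) = Y1 := funext fun ω => hφ1Y ω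
  have hφ0Yf : (fun ω => φ0 ((fun ω => (Y1 ω, Y0 ω)) ω)) = Y0 := funext fun ω => hφ0Y ω
  have hP : Measurable (fun ω => (Y1 ω, Y0 ω)) := hY1.prodMk hY0
  -- condexp versions under μ
  have hce1 : (fun ω => m1 (X ω)) =ᵐ[μ]
      μ[(fun ω => φ1 ((fun ω => (Y1 ω, Y0 ω)) ω))|MeasurableSpace.comap X inferInstance] := by
    rw [hφ1Yf]; exact hm1
  have hce0 : (fun ω => m0 (X ω)) =ᵐ[μ]
      μ[(fun ω => φ0 ((fun ω => (Y1 ω, Y0 ω)) ω))|MeasurableSpace.comap X inferInstance] := by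
    rw [hφ0Yf]; exact hm0
  have honeSM : StronglyMeasurable[MeasurableSpace.comap X inferInstance]
      (fun _ : Ω => (1:ℝ)) := stronglyMeasurable_const
  -- a.e. bounds on the outcome regressions
  have hm1bd : ∀ᵐ ω ∂μ, |m1 (X ω)| ≤ C := by
    have h1 : ∀ᵐ ω ∂μ, |Y1 ω| ≤ ((C.toNNReal : ℝ≥0) : ℝ) := ae_of_all _ fun ω => by
      rw [Real.coe_toNNReal _ hC0]; exact (hbound ω).1
    have h2 := ae_bdd_condExp_of_ae_bdd (m := MeasurableSpace.comap X inferInstance) h1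
    filter_upwards [hm1, h2] with ω h3 h4
    rw [h3]
    calc |(μ[Y1|MeasurableSpace.comap X inferInstance]) ω| ≤ ((C.toNNReal : ℝ≥0) : ℝ) := h4
      _ = C := Real.coe_toNNReal _ hC0
  have hm0bd : ∀ᵐ ω ∂μ, |m0 (X ω)| ≤ C := by
    have h1 : ∀ᵐ ω ∂μ, |Y0 ω| ≤ ((C.toNNReal : ℝ≥0) : ℝ) := ae_of_all _ fun ω => by
      rw [Real.coe_toNNReal _ hC0]; exact (hbound ω).2
    have h2 := ae_bdd_condExp_of_ae_bdd (m := MeasurableSpace.comap X inferInstance) h1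
    filter_upwards [hm0, h2] with ω h3 h4
    rw [h3]
    calc |(μ[Y0|MeasurableSpace.comap X inferInstance]) ω| ≤ ((C.toNNReal : ℝ≥0) : ℝ) := h4
      _ = C := Real.coe_toNNReal _ hC0
  -- conditional measures
  have hacν1 : μ[|S ⁻¹' {1}] ≪ μ := by
    show ((μ (S ⁻¹' {1}))⁻¹ • μ.restrict (S ⁻¹' {1})) ≪ μ
    exact (Measure.absolutelyContinuous_of_le Measure.restrict_le_self).smul_left _
  have hacν0 : μ[|S ⁻¹' {0}] ≪ μ := by
    show ((μ (S ⁻¹' {0}))⁻¹ • μ.restrict (S ⁻¹' {0})) ≪ μ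
    exact (Measure.absolutelyContinuous_of_le Measure.restrict_le_self).smul_left _
  haveI hν1P : IsProbabilityMeasure (μ[|S ⁻¹' {1}]) :=
    ProbabilityTheory.cond_isProbabilityMeasure hS1pos.ne'
  haveI hν0P : IsProbabilityMeasure (μ[|S ⁻¹' {0}]) :=
    ProbabilityTheory.cond_isProbabilityMeasure hS0pos.ne'
  have hm1bdν1 : ∀ᵐ ω ∂(μ[|S ⁻¹' {1}]), |m1 (X ω)| ≤ C := hm1bd.filter_mono hacν1.ae_le
  have hm0bdν1 : ∀ᵐ ω ∂(μ[|S ⁻¹' {1}]), |m0 (X ω)| ≤ C := hm0bd.filter_mono hacν1.ae_le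
  have hm1bdν0 : ∀ᵐ ω ∂(μ[|S ⁻¹' {0}]), |m1 (X ω)| ≤ C := hm1bd.filter_mono hacν0.ae_le
  have hm0bdν0 : ∀ᵐ ω ∂(μ[|S ⁻¹' {0}]), |m0 (X ω)| ≤ C := hm0bd.filter_mono hacν0.ae_le
  -- pointwise indicator juggling
  have indmul : ∀ (s t : Set Ω) (f : Ω → ℝ) (ω : Ω),
      t.indicator (fun _ => (1:ℝ)) ω * s.indicator f ω
        = s.indicator (fun _ => (1:ℝ)) ω * t.indicator (fun _ => (1:ℝ)) ω * f ω := by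
    intro s t f ω
    by_cases h1 : ω ∈ s <;> by_cases h2 : ω ∈ t <;>
      simp [Set.indicator_of_mem, Set.indicator_of_notMem, h1, h2]
  -- outcome regressions are also conditional expectations under μ[|S=1]
  have hceν1 : ∀ (m' : 𝒳 → ℝ), Measurable m' → (φ' : ℝ × ℝ → ℝ) → Measurable φ' →
      (∀ p, |φ' p| ≤ C) → (Yc : Ω → ℝ) → Measurable Yc →
      (∀ ω, |Yc ω| ≤ C) →
      (∀ ω, φ' (Y1 ω, Y0 ω) = Yc ω) →
      ((fun ω => m' (X ω)) =ᵐ[μ]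
        μ[(fun ω => φ' ((fun ω => (Y1 ω, Y0 ω)) ω))|MeasurableSpace.comap X inferInstance]) →
      (∀ᵐ ω ∂(μ[|S ⁻¹' {1}]), |m' (X ω)| ≤ C) →
      (fun ω => m' (X ω)) =ᵐ[μ[|S ⁻¹' {1}]]
        (μ[|S ⁻¹' {1}])[Yc|MeasurableSpace.comap X inferInstance] := by
    intro m' hm'm φ' hφ'm hφ'D Yc hYcm hYcbd hφ'Yω hce' hbdν
    refine ae_eq_condExp_of_forall_setIntegral_eq hXle
      (intOfBdd _ hYcm (ae_of_all _ fun ω => hYcbd ω))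
      (fun s hs _ => (intOfBdd _ (hm'm.comp hX) hbdν).integrableOn)
      (fun s hs _ => ?_) ((hsm hm'm).aestronglyMeasurable)
    have hsΩ : MeasurableSet s := hXle s hs
    have hus : StronglyMeasurable[MeasurableSpace.comap X inferInstance]
        (s.indicator (fun _ => (1:ℝ))) := stronglyMeasurable_const.indicator hs
    have hus0 : ∀ ω, 0 ≤ s.indicator (fun _ => (1:ℝ)) ω := fun ω => by
      by_cases h : ω ∈ s <;> simp [Set.indicator_of_mem, Set.indicator_of_notMem, h]
    have hus1 : ∀ ω, s.indicator (fun _ => (1:ℝ)) ω ≤ 1 := fun ω => by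
      by_cases h : ω ∈ s <;> simp [Set.indicator_of_mem, Set.indicator_of_notMem, h]
    have hsw := swap μ hXle hP hS hexchS 1 hus hus0 hus1 hφ'm hφ'D (hsm hm'm) hce'
    simp only [hφ'Yω] at hsw
    rw [← integral_indicator hsΩ, ← integral_indicator hsΩ,
      cond_integral μ hT1m, cond_integral μ hT1m]
    congr 1
    calc ∫ ω, (S ⁻¹' {1}).indicator (fun _ => (1:ℝ)) ω
          * s.indicator (fun x => m' (X x)) ω ∂μ
        = ∫ ω, s.indicator (fun _ => (1:ℝ)) ω * (S ⁻¹' {1}).indicator (fun _ => (1:ℝ)) ω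
            * m' (X ω) ∂μ := integral_congr_ae (ae_of_all _ fun ω => indmul _ _ _ ω)
      _ = ∫ ω, s.indicator (fun _ => (1:ℝ)) ω * (S ⁻¹' {1}).indicator (fun _ => (1:ℝ)) ω
            * Yc ω ∂μ := hsw.symm
      _ = ∫ ω, (S ⁻¹' {1}).indicator (fun _ => (1:ℝ)) ω * s.indicator Yc ω ∂μ :=
          (integral_congr_ae (ae_of_all _ fun ω => indmul _ _ _ ω)).symm
  have hce1ν1 := hceν1 m1 hm1m φ1 hφ1m hφ1D Y1 hY1 (fun ω => (hbound ω).1) hφ1Y hce1 hm1bdν1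
  have hce0ν1 := hceν1 m0 hm0m φ0 hφ0m hφ0D Y0 hY0 (fun ω => (hbound ω).2) hφ0Y hce0 hm0bdν1
  -- the weight functions g1, g0 on 𝒳
  set g1 : 𝒳 → ℝ := fun x => (1 - ht x) / (ht x * te1 x) with hg1def
  set g0 : 𝒳 → ℝ := fun x => (1 - ht x) / (ht x * te0 x) with hg0def
  have hg1m : Measurable g1 := (measurable_const.sub htm).div (htm.mul hte1m)
  have hg0m : Measurable g0 := (measurable_const.sub htm).div (htm.mul hte0m)
  have hg1nn : ∀ x, 0 ≤ g1 x := fun x => by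
    have h1 := (htb x).1; have h2 := (htb x).2; have h3 := (hteb x).1
    exact div_nonneg (by linarith) (by nlinarith)
  have hg0nn : ∀ x, 0 ≤ g0 x := fun x => by
    have h1 := (htb x).1; have h2 := (htb x).2; have h3 := (hteb x).2.2.1
    exact div_nonneg (by linarith) (by nlinarith)
  have hg1B : ∀ x, g1 x ≤ 1 / (c * c) := fun x => by
    have h1 := (htb x).1; have h2 := (htb x).2; have h3 := (hteb x).1
    exact div_le_div₀ zero_le_one (by linarith) (by nlinarith) (by nlinarith)
  have hg0B : ∀ x, g0 x ≤ 1 / (c * c) := fun x => by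
    have h1 := (htb x).1; have h2 := (htb x).2; have h3 := (hteb x).2.2.1
    exact div_le_div₀ zero_le_one (by linarith) (by nlinarith) (by nlinarith)
  -- generic bound for triple products
  have bdd3 : ∀ (a i y D E : ℝ), 0 ≤ a → a ≤ D → |i| ≤ 1 → |y| ≤ E → 0 ≤ E →
      |a * i * y| ≤ D * E := by
    intro a i y D E h1 h2 h3 h4 h5
    have hD : 0 ≤ D := le_trans h1 h2
    rw [abs_mul, abs_mul, abs_of_nonneg h1]
    calc a * |i| * |y| ≤ a * |i| * E :=
          mul_le_mul_of_nonneg_left h4 (mul_nonneg h1 (abs_nonneg _))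
      _ ≤ (D * 1) * E := mul_le_mul_of_nonneg_right
          (mul_le_mul h2 h3 (abs_nonneg _) hD) h5
      _ = D * E := by ring
  have hiA1bd : ∀ ω, |(A ⁻¹' {1}).indicator (fun _ => (1:ℝ)) ω| ≤ 1 := fun ω => by
    by_cases h : ω ∈ A ⁻¹' {1} <;>
      simp [Set.indicator_of_mem, Set.indicator_of_notMem, h]
  have hiA0bd : ∀ ω, |(A ⁻¹' {0}).indicator (fun _ => (1:ℝ)) ω| ≤ 1 := fun ω => by
    by_cases h : ω ∈ A ⁻¹' {0} <;>
      simp [Set.indicator_of_mem, Set.indicator_of_notMem, h]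
  have hiA1m : Measurable ((A ⁻¹' {1}).indicator (fun _ : Ω => (1:ℝ))) :=
    measurable_const.indicator (hA (measurableSet_singleton 1))
  have hiA0m : Measurable ((A ⁻¹' {0}).indicator (fun _ : Ω => (1:ℝ))) :=
    measurable_const.indicator (hA (measurableSet_singleton 0))
  -- the two ν₁-integrals vanish
  have hGν : ∀ (g' : 𝒳 → ℝ), Measurable g' → (∀ x, 0 ≤ g' x) → (∀ x, g' x ≤ 1 / (c*c)) →
      ∀ (φ' : ℝ × ℝ → ℝ), Measurable φ' → (∀ p, |φ' p| ≤ C) →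
      ∀ (Yc : Ω → ℝ), Measurable Yc → (∀ ω, |Yc ω| ≤ C) →
      (∀ ω, φ' (Y1 ω, Y0 ω) = Yc ω) →
      ∀ (m' : 𝒳 → ℝ), Measurable m' →
      (∀ᵐ ω ∂(μ[|S ⁻¹' {1}]), |m' (X ω)| ≤ C) →
      ((fun ω => m' (X ω)) =ᵐ[μ[|S ⁻¹' {1}]]
        (μ[|S ⁻¹' {1}])[Yc|MeasurableSpace.comap X inferInstance]) →
      ∀ (t : ℝ),
      ∫ ω, g' (X ω) * (A ⁻¹' {t}).indicator (fun _ => (1:ℝ)) ω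
        * (Yc ω - m' (X ω)) ∂(μ[|S ⁻¹' {1}]) = 0 := by
    intro g' hg'm hg'nn hg'B φ' hφ'm hφ'D Yc hYcm hYcbd hφ'Yω m' hm'm hbdν hceν t
    have hceν' : (fun ω => m' (X ω)) =ᵐ[μ[|S ⁻¹' {1}]]
        (μ[|S ⁻¹' {1}])[(fun ω => φ' ((fun ω => (Y1 ω, Y0 ω)) ω))|
          MeasurableSpace.comap X inferInstance] := by
      rw [show (fun ω => φ' ((fun ω => (Y1 ω, Y0 ω)) ω)) = Yc from funext hφ'Yω]
      exact hceν
    have hsw := swap (μ[|S ⁻¹' {1}]) hXle hP hA hexchA t (hsm hg'm)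
      (fun ω => hg'nn (X ω)) (fun ω => hg'B (X ω)) hφ'm hφ'D (hsm hm'm) hceν'
    simp only [hφ'Yω] at hsw
    have hiAm : Measurable ((A ⁻¹' {t}).indicator (fun _ : Ω => (1:ℝ))) :=
      measurable_const.indicator (hA (measurableSet_singleton t))
    have hiAbd : ∀ ω, |(A ⁻¹' {t}).indicator (fun _ => (1:ℝ)) ω| ≤ 1 := fun ω => by
      by_cases h : ω ∈ A ⁻¹' {t} <;>
        simp [Set.indicator_of_mem, Set.indicator_of_notMem, h]
    have i1 : Integrable (fun ω => g' (X ω) * (A ⁻¹' {t}).indicator (fun _ => (1:ℝ)) ω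
        * Yc ω) (μ[|S ⁻¹' {1}]) :=
      intOfBdd _ (((hg'm.comp hX).mul hiAm).mul hYcm) (ae_of_all _ fun ω =>
        bdd3 _ _ _ _ _ (hg'nn _) (hg'B _) (hiAbd ω) (hYcbd ω) hC0)
    have i2 : Integrable (fun ω => g' (X ω) * (A ⁻¹' {t}).indicator (fun _ => (1:ℝ)) ω
        * m' (X ω)) (μ[|S ⁻¹' {1}]) :=
      intOfBdd _ (((hg'm.comp hX).mul hiAm).mul (hm'm.comp hX)) <| by
        filter_upwards [hbdν] with ω hb
        exact bdd3 _ _ _ _ _ (hg'nn _) (hg'B _) (hiAbd ω) hb hC0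
    calc ∫ ω, g' (X ω) * (A ⁻¹' {t}).indicator (fun _ => (1:ℝ)) ω
          * (Yc ω - m' (X ω)) ∂(μ[|S ⁻¹' {1}])
        = ∫ ω, (g' (X ω) * (A ⁻¹' {t}).indicator (fun _ => (1:ℝ)) ω * Yc ω)
            - (g' (X ω) * (A ⁻¹' {t}).indicator (fun _ => (1:ℝ)) ω * m' (X ω))
            ∂(μ[|S ⁻¹' {1}]) :=
          integral_congr_ae (ae_of_all _ fun ω => by ring)
      _ = (∫ ω, g' (X ω) * (A ⁻¹' {t}).indicator (fun _ => (1:ℝ)) ω * Yc ω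
            ∂(μ[|S ⁻¹' {1}]))
          - ∫ ω, g' (X ω) * (A ⁻¹' {t}).indicator (fun _ => (1:ℝ)) ω * m' (X ω)
            ∂(μ[|S ⁻¹' {1}]) := integral_sub i1 i2
      _ = 0 := by rw [hsw]; ring
  have hG1ν := hGν g1 hg1m hg1nn hg1B φ1 hφ1m hφ1D Y1 hY1 (fun ω => (hbound ω).1)
    hφ1Y m1 hm1m hm1bdν1 hce1ν1 1
  have hG0ν := hGν g0 hg0m hg0nn hg0B φ0 hφ0m hφ0D Y0 hY0 (fun ω => (hbound ω).2)
    hφ0Y m0 hm0m hm0bdν1 hce0ν1 0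
  -- the numerators of the weighting terms vanish
  have hT1ne : (μ (S ⁻¹' {1})).toReal ≠ 0 :=
    ENNReal.toReal_ne_zero.mpr ⟨hS1pos.ne', measure_ne_top μ _⟩
  have hnum : ∀ (w' Yc : Ω → ℝ) (t : ℝ) (g' m' : 𝒳 → ℝ),
      (∀ ω, w' ω * R ω = (S ⁻¹' {1}).indicator (fun _ => (1:ℝ)) ω
        * (g' (X ω) * (A ⁻¹' {t}).indicator (fun _ => (1:ℝ)) ω * (Yc ω - m' (X ω)))) →
      (∫ ω, g' (X ω) * (A ⁻¹' {t}).indicator (fun _ => (1:ℝ)) ω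
        * (Yc ω - m' (X ω)) ∂(μ[|S ⁻¹' {1}]) = 0) →
      ∫ ω, w' ω * R ω ∂μ = 0 := by
    intro w' Yc t g' m' hpt hzero
    have h1 : ∫ ω, w' ω * R ω ∂μ
        = ∫ ω, (S ⁻¹' {1}).indicator (fun _ => (1:ℝ)) ω
            * (g' (X ω) * (A ⁻¹' {t}).indicator (fun _ => (1:ℝ)) ω
              * (Yc ω - m' (X ω))) ∂μ :=
      integral_congr_ae (ae_of_all _ hpt)
    have h2 := cond_integral μ hT1m (fun ω => g' (X ω)
      * (A ⁻¹' {t}).indicator (fun _ => (1:ℝ)) ω * (Yc ω - m' (X ω)))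
    rw [hzero] at h2
    have h3 : ∫ ω, (S ⁻¹' {1}).indicator (fun _ => (1:ℝ)) ω
        * (g' (X ω) * (A ⁻¹' {t}).indicator (fun _ => (1:ℝ)) ω
          * (Yc ω - m' (X ω))) ∂μ = 0 := by
      rcases mul_eq_zero.mp h2.symm with h | h
      · exact absurd h (inv_ne_zero hT1ne)
      · exact h
    rw [h1, h3]
  have hpt1 : ∀ ω, w1 ω * R ω = (S ⁻¹' {1}).indicator (fun _ => (1:ℝ)) ω
      * (g1 (X ω) * (A ⁻¹' {1}).indicator (fun _ => (1:ℝ)) ω * (Y1 ω - m1 (X ω))) := by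
    intro ω
    rcases hSbin ω with h | h
    · have hne : ¬ (S ω = 1 ∧ A ω = 1) := fun hc' => by
        rw [h] at hc'; exact zero_ne_one hc'.1
      have hmem : ω ∉ S ⁻¹' {1} := by simp [Set.mem_preimage, h]
      rw [hw1 ω, hR ω, h]
      simp [hne, Set.indicator_of_notMem hmem]
    · rcases hAbin ω with h' | h'
      · have hne : ¬ (S ω = 1 ∧ A ω = 1) := fun hc' => by
          rw [h'] at hc'; exact zero_ne_one hc'.2
        have hmem : ω ∉ A ⁻¹' {1} := by simp [Set.mem_preimage, h']
        have hmem1 : ω ∈ S ⁻¹' {1} := by simp [Set.mem_preimage, h]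
        rw [hw1 ω, hR ω]
        simp [hne, Set.indicator_of_notMem hmem, Set.indicator_of_mem hmem1]
      · have hm1' : ω ∈ S ⁻¹' {1} := by simp [Set.mem_preimage, h]
        have hm2' : ω ∈ A ⁻¹' {1} := by simp [Set.mem_preimage, h']
        rw [hw1 ω, hR ω, hconsist ω h, h, h']
        simp [Set.indicator_of_mem hm1', Set.indicator_of_mem hm2', g1]
  have hpt0 : ∀ ω, w0 ω * R ω = (S ⁻¹' {1}).indicator (fun _ => (1:ℝ)) ω
      * (g0 (X ω) * (A ⁻¹' {0}).indicator (fun _ => (1:ℝ)) ω * (Y0 ω - m0 (X ω))) := by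
    intro ω
    rcases hSbin ω with h | h
    · have hne : ¬ (S ω = 1 ∧ A ω = 0) := fun hc' => by
        rw [h] at hc'; exact zero_ne_one hc'.1
      have hmem : ω ∉ S ⁻¹' {1} := by simp [Set.mem_preimage, h]
      rw [hw0 ω, hR ω, h]
      simp [hne, Set.indicator_of_notMem hmem]
    · rcases hAbin ω with h' | h'
      · have hm1' : ω ∈ S ⁻¹' {1} := by simp [Set.mem_preimage, h]
        have hm2' : ω ∈ A ⁻¹' {0} := by simp [Set.mem_preimage, h']
        rw [hw0 ω, hR ω, hconsist ω h, h, h']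
        simp [Set.indicator_of_mem hm1', Set.indicator_of_mem hm2', g0]
      · have hne : ¬ (S ω = 1 ∧ A ω = 0) := fun hc' => by
          rw [h'] at hc'; exact one_ne_zero hc'.2
        have hmem : ω ∉ A ⁻¹' {0} := by simp [Set.mem_preimage, h']
        have hmem1 : ω ∈ S ⁻¹' {1} := by simp [Set.mem_preimage, h]
        rw [hw0 ω, hR ω]
        simp [hne, Set.indicator_of_notMem hmem, Set.indicator_of_mem hmem1]
  have hw1R : ∫ ω, w1 ω * R ω ∂μ = 0 := hnum w1 Y1 1 g1 m1 hpt1 hG1ν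
  have hw0R : ∫ ω, w0 ω * R ω ∂μ = 0 := hnum w0 Y0 0 g0 m0 hpt0 hG0ν
  -- part 2 : conditional means coincide on S = 0
  have hkey : ∀ (Yc : Ω → ℝ), Measurable Yc → (∀ ω, |Yc ω| ≤ C) →
      ∀ (φ' : ℝ × ℝ → ℝ), Measurable φ' → (∀ p, |φ' p| ≤ C) →
      (∀ ω, φ' (Y1 ω, Y0 ω) = Yc ω) →
      ∀ (m' : 𝒳 → ℝ), Measurable m' →
      ((fun ω => m' (X ω)) =ᵐ[μ] μ[(fun ω => φ' ((fun ω => (Y1 ω, Y0 ω)) ω))|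
        MeasurableSpace.comap X inferInstance]) →
      ∫ ω, Yc ω ∂(μ[|S ⁻¹' {0}]) = ∫ ω, m' (X ω) ∂(μ[|S ⁻¹' {0}]) := by
    intro Yc hYcm hYcbd φ' hφ'm hφ'D hφ'Yω m' hm'm hce'
    have hsw := swap μ hXle hP hS hexchS 0 honeSM (fun _ => zero_le_one)
      (fun _ => le_refl (1:ℝ)) hφ'm hφ'D (hsm hm'm) hce'
    simp only [hφ'Yω, one_mul] at hsw
    rw [cond_integral μ hT0m, cond_integral μ hT0m, hsw]
  have he1 := hkey Y1 hY1 (fun ω => (hbound ω).1) φ1 hφ1m hφ1D hφ1Y m1 hm1m hce1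
  have he0 := hkey Y0 hY0 (fun ω => (hbound ω).2) φ0 hφ0m hφ0D hφ0Y m0 hm0m hce0
  have hi1 : Integrable Y1 (μ[|S ⁻¹' {0}]) :=
    intOfBdd _ hY1 (ae_of_all _ fun ω => (hbound ω).1)
  have hi0 : Integrable Y0 (μ[|S ⁻¹' {0}]) :=
    intOfBdd _ hY0 (ae_of_all _ fun ω => (hbound ω).2)
  have him1 : Integrable (fun ω => m1 (X ω)) (μ[|S ⁻¹' {0}]) :=
    intOfBdd _ (hm1m.comp hX) hm1bdν0
  have him0 : Integrable (fun ω => m0 (X ω)) (μ[|S ⁻¹' {0}]) :=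
    intOfBdd _ (hm0m.comp hX) hm0bdν0
  rw [hτaw, hw1R, hw0R, zero_div, zero_div, sub_zero, zero_add]
  calc ∫ ω, m1 (X ω) - m0 (X ω) ∂(μ[|S ⁻¹' {0}])
      = (∫ ω, m1 (X ω) ∂(μ[|S ⁻¹' {0}])) - ∫ ω, m0 (X ω) ∂(μ[|S ⁻¹' {0}]) :=
        integral_sub him1 him0
    _ = (∫ ω, Y1 ω ∂(μ[|S ⁻¹' {0}])) - ∫ ω, Y0 ω ∂(μ[|S ⁻¹' {0}]) := by
        rw [← he1, ← he0]
    _ = ∫ ω, Y1 ω - Y0 ω ∂(μ[|S ⁻¹' {0}]) := (integral_sub hi1 hi0).symm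
end
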